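/- arXiv:0903.1188 — 4 statements merged into one kernel-verified Lean document; each statement's English description precedes it below -/
import Mathlib

section
/- Let 𝔤 be a weakly root graded Lie algebra with root decomposition 𝔤 = 𝔤₀ ⊕ ⊕_{α∈ℛ} 𝔤_α relative to a Cartan subalgebra 𝔥, with all 𝔤_α ≠ 0 for α ∈ ℛ, and let 𝔭 = 𝔤₀ + Σ_{α∈Σ} 𝔤_α be the parabolic subalgebra associated to a parabolic system Σ. Then the normalizer of 𝔭 in 𝔤 equals 𝔭. -/
/-- The `χ`-weight space of a Lie algebra `L` relative to a subalgebra `H`. -/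
def wtSpace {L : Type*} [LieRing L] [LieAlgebra ℂ L] (H : LieSubalgebra ℂ L)
    (χ : Module.Dual ℂ H) : Submodule ℂ L where
  carrier := {y | ∀ h : H, ⁅(h : L), y⁆ = χ h • y}
  add_mem' := by
    intro a b ha hb h
    rw [lie_add, ha h, hb h, smul_add]
  zero_mem' := by intro h; simp
  smul_mem' := by
    intro c a ha h
    rw [lie_smul, ha h]
    exact smul_comm c (χ h) a

lemma mem_wtSpace {L : Type*} [LieRing L] [LieAlgebra ℂ L] {H : LieSubalgebra ℂ L}
    {χ : Module.Dual ℂ H} {y : L} :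
    y ∈ wtSpace H χ ↔ ∀ h : H, ⁅(h : L), y⁆ = χ h • y := Iff.rfl

lemma wt_lie {L : Type*} [LieRing L] [LieAlgebra ℂ L] {H : LieSubalgebra ℂ L}
    {χ ψ : Module.Dual ℂ H} {z w : L} (hz : z ∈ wtSpace H χ) (hw : w ∈ wtSpace H ψ) :
    ⁅z, w⁆ ∈ wtSpace H (χ + ψ) := by
  intro h
  rw [leibniz_lie, hz h, hw h, smul_lie, lie_smul, LinearMap.add_apply, add_smul]

/-- The normalizer of a submodule, as a submodule. -/
def nrm {L : Type*} [LieRing L] [LieAlgebra ℂ L] (P : Submodule ℂ L) : Submodule ℂ L where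
  carrier := {z | ∀ p ∈ P, ⁅z, p⁆ ∈ P}
  add_mem' := by
    intro a b ha hb p hp
    rw [add_lie]; exact P.add_mem (ha p hp) (hb p hp)
  zero_mem' := by intro p hp; rw [zero_lie]; exact P.zero_mem
  smul_mem' := by
    intro c a ha p hp
    rw [smul_lie]; exact P.smul_mem c (ha p hp)

lemma mem_nrm {L : Type*} [LieRing L] [LieAlgebra ℂ L] {P : Submodule ℂ L} {z : L} :
    z ∈ nrm P ↔ ∀ p ∈ P, ⁅z, p⁆ ∈ P := Iff.rfl

lemma lie_sum' {L : Type*} [LieRing L] [LieAlgebra ℂ L] (x : L) {ι : Type*}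
    (s : Finset ι) (f : ι → L) : ⁅x, ∑ i ∈ s, f i⁆ = ∑ i ∈ s, ⁅x, f i⁆ := by
  classical
  induction s using Finset.induction_on with
  | empty => simp
  | insert _ _ ha ih => rw [Finset.sum_insert ha, Finset.sum_insert ha, lie_add, ih]

lemma sum_lie' {L : Type*} [LieRing L] [LieAlgebra ℂ L] (x : L) {ι : Type*}
    (s : Finset ι) (f : ι → L) : ⁅∑ i ∈ s, f i, x⁆ = ∑ i ∈ s, ⁅f i, x⁆ := by
  classical
  induction s using Finset.induction_on with
  | empty => simp
  | insert _ _ ha ih => rw [Finset.sum_insert ha, Finset.sum_insert ha, add_lie, ih]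

lemma mem_bsup {ι M : Type*} [AddCommGroup M] [Module ℂ M]
    (s : Finset ι) (p : ι → Submodule ℂ M) {x : M} (hx : x ∈ ⨆ χ ∈ s, p χ) :
    ∃ v : ι → M, (∀ χ ∈ s, v χ ∈ p χ) ∧ x = ∑ χ ∈ s, v χ := by
  classical
  induction s using Finset.induction_on generalizing x with
  | empty =>
    simp only [Finset.notMem_empty, iSup_false, iSup_bot, Submodule.mem_bot] at hx
    exact ⟨0, by simp, by simp [hx]⟩
  | @insert a s ha ih =>
    rw [Finset.iSup_insert] at hx
    obtain ⟨u, hu, w, hw, huw⟩ := Submodule.mem_sup.mp hx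
    obtain ⟨v, hv, hwsum⟩ := ih hw
    refine ⟨Function.update v a u, ?_, ?_⟩
    · intro χ hχ
      rcases Finset.mem_insert.mp hχ with rfl | hχ2
      · rw [Function.update_self]; exact hu
      · rw [Function.update_of_ne (by rintro rfl; exact ha hχ2)]; exact hv χ hχ2
    · rw [Finset.sum_insert ha, Function.update_self]
      rw [Finset.sum_congr rfl (fun χ hχ => Function.update_of_ne (by rintro rfl; exact ha hχ) u v)]
      rw [← hwsum, huw]

lemma extract {L : Type*} [LieRing L] [LieAlgebra ℂ L] (H : LieSubalgebra ℂ L)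
    (N : Submodule ℂ L) (hN : ∀ h : H, ∀ m ∈ N, ⁅(h : L), m⁆ ∈ N) :
    ∀ (n : ℕ) (s : Finset (Module.Dual ℂ H)), s.card ≤ n →
      ∀ v : Module.Dual ℂ H → L, (∀ χ ∈ s, v χ ∈ wtSpace H χ) →
      (∑ χ ∈ s, v χ) ∈ N → ∀ a ∈ s, v a ∈ N := by
  classical
  intro n
  induction n with
  | zero =>
    intro s hs v _ _ a ha
    rw [Nat.le_zero, Finset.card_eq_zero] at hs
    subst hs; exact absurd ha (Finset.notMem_empty a)
  | succ n ih =>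
    intro s hs v hv hsum a ha
    by_cases hb : ∀ b ∈ s, b = a
    · have hs1 : s = {a} := Finset.eq_singleton_iff_unique_mem.mpr ⟨ha, hb⟩
      rw [hs1, Finset.sum_singleton] at hsum
      exact hsum
    · push_neg at hb
      obtain ⟨b, hbs, hba⟩ := hb
      obtain ⟨h, hh⟩ : ∃ h : H, b h ≠ a h := by
        by_contra hcon; push_neg at hcon; exact hba (LinearMap.ext hcon)
      have hsum' : (∑ χ ∈ s.erase b, (χ h - b h) • v χ) ∈ N := by
        have e : ∑ χ ∈ s.erase b, (χ h - b h) • v χ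
            = ⁅(h : L), ∑ χ ∈ s, v χ⁆ - b h • ∑ χ ∈ s, v χ := by
          rw [lie_sum', Finset.smul_sum, ← Finset.sum_sub_distrib,
            Finset.sum_erase_eq_sub hbs]
          simp only [hv b hbs h, sub_self, zero_smul, sub_zero]
          refine Finset.sum_congr rfl fun χ hχ => ?_
          rw [hv χ hχ h, sub_smul]
        rw [e]
        exact N.sub_mem (hN h _ hsum) (N.smul_mem _ hsum)
      have hcard : (s.erase b).card ≤ n := by
        have h1 := Finset.card_erase_of_mem hbs
        have h2 : 1 ≤ s.card := Finset.card_pos.mpr ⟨b, hbs⟩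
        omega
      have hres := ih (s.erase b) hcard _
        (fun χ hχ => Submodule.smul_mem _ _ (hv χ (Finset.mem_of_mem_erase hχ)))
        hsum' a (Finset.mem_erase.mpr ⟨Ne.symm hba, ha⟩)
      have hne : a h - b h ≠ 0 := sub_ne_zero.mpr (Ne.symm hh)
      have := N.smul_mem (a h - b h)⁻¹ hres
      rwa [inv_smul_smul₀ hne] at this

lemma wt_indep {L : Type*} [LieRing L] [LieAlgebra ℂ L] (H : LieSubalgebra ℂ L)
    (s : Finset (Module.Dual ℂ H)) {γ : Module.Dual ℂ H} (hγ : γ ∉ s) {z : L}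
    (hz : z ∈ wtSpace H γ) (hzs : z ∈ ⨆ χ ∈ s, wtSpace (L := L) H χ) : z = 0 := by
  classical
  obtain ⟨v, hv, hzsum⟩ := mem_bsup _ _ hzs
  have hbN : ∀ h : H, ∀ m ∈ (⊥ : Submodule ℂ L), ⁅(h : L), m⁆ ∈ (⊥ : Submodule ℂ L) := by
    intro h m hm; rw [Submodule.mem_bot] at hm ⊢; rw [hm, lie_zero]
  have key := extract H ⊥ hbN (insert γ s).card (insert γ s) le_rfl
      (Function.update v γ (-z)) ?_ ?_ γ (Finset.mem_insert_self _ _)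
  · rw [Function.update_self, Submodule.mem_bot, neg_eq_zero] at key; exact key
  · intro χ hχ
    rcases Finset.mem_insert.mp hχ with rfl | hχ2
    · rw [Function.update_self]; exact Submodule.neg_mem _ hz
    · rw [Function.update_of_ne (by rintro rfl; exact hγ hχ2)]; exact hv χ hχ2
  · have hsum0 : (∑ χ ∈ insert γ s, Function.update v γ (-z) χ) = 0 := by
      rw [Finset.sum_insert hγ, Function.update_self,
        Finset.sum_congr rfl (fun χ hχ => Function.update_of_ne (by rintro rfl; exact hγ hχ) (-z) v),
        ← hzsum, neg_add_cancel]
    rw [hsum0]; exact Submodule.zero_mem _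

/-- Let `L = L₀ ⊕ ⊕_{α∈R} L_α` be the root decomposition of a weakly root
graded Lie algebra relative to the Cartan subalgebra `H` (all root spaces nonzero), and let
`𝔭 = L₀ ⊔ ⨆_{α∈Σ} L_α` be the parabolic subalgebra of the parabolic system
`Σ = {α ∈ R | α(x) ≥ 0}`. Then the normalizer of `𝔭` in `L` equals `𝔭`. -/
theorem stmt3 {L : Type*} [LieRing L] [LieAlgebra ℂ L]
    (H : LieSubalgebra ℂ L)
    (R : Finset (Module.Dual ℂ H)) (h0R : (0 : Module.Dual ℂ H) ∉ R)
    (hnz : ∀ α ∈ R, wtSpace (L := L) H α ≠ ⊥)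
    (hH0 : H.toSubmodule ≤ wtSpace H 0)
    (hdecomp : (wtSpace H 0 ⊔ ⨆ α ∈ R, wtSpace (L := L) H α) = ⊤)
    (Ss : Finset (Module.Dual ℂ H)) (hSR : Ss ⊆ R)
    (x : H) (hreal : ∀ α ∈ R, (α x).im = 0)
    (hpar : ∀ α ∈ R, (α ∈ Ss ↔ 0 ≤ (α x).re)) :
    ∀ y : L,
      (∀ p ∈ (wtSpace H 0 ⊔ ⨆ α ∈ Ss, wtSpace (L := L) H α), ⁅y, p⁆ ∈
          (wtSpace H 0 ⊔ ⨆ α ∈ Ss, wtSpace (L := L) H α)) ↔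
        y ∈ (wtSpace H 0 ⊔ ⨆ α ∈ Ss, wtSpace (L := L) H α) := by
  classical
  intro y
  have hTw : (⊤ : Submodule ℂ L)
      = ⨆ χ ∈ insert (0 : Module.Dual ℂ H) R, wtSpace (L := L) H χ := by
    rw [Finset.iSup_insert]; exact hdecomp.symm
  set P : Submodule ℂ L := wtSpace H 0 ⊔ ⨆ α ∈ Ss, wtSpace (L := L) H α with hP
  have hPw : P = ⨆ χ ∈ insert (0 : Module.Dual ℂ H) Ss, wtSpace (L := L) H χ := by
    rw [Finset.iSup_insert]
  have hPle : ∀ χ ∈ insert (0 : Module.Dual ℂ H) Ss, wtSpace (L := L) H χ ≤ P := by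
    intro χ hχ
    rw [hPw]
    exact le_biSup _ hχ
  have hPinv : ∀ h : H, ∀ p ∈ P, ⁅(h : L), p⁆ ∈ P := by
    intro h p hp
    rw [hPw] at hp
    obtain ⟨v, hv, rfl⟩ := mem_bsup _ _ hp
    rw [lie_sum']
    refine Submodule.sum_mem _ fun χ hχ => ?_
    exact hPle χ hχ (by rw [hv χ hχ h]; exact Submodule.smul_mem _ _ (hv χ hχ))
  constructor
  · intro hy
    have hyN : y ∈ nrm P := hy
    have hNinv : ∀ h : H, ∀ m ∈ nrm P, ⁅(h : L), m⁆ ∈ nrm P := by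
      intro h m hm p hp
      rw [lie_lie]
      exact P.sub_mem (hPinv h _ (hm p hp)) (hm _ (hPinv h p hp))
    have hyT : y ∈ (⊤ : Submodule ℂ L) := trivial
    rw [hTw] at hyT
    obtain ⟨v, hv, hysum⟩ := mem_bsup _ _ hyT
    have hcomp := extract H (nrm P) hNinv _ _ le_rfl v hv
      (by rw [← hysum]; exact hyN)
    rw [hysum]
    refine Submodule.sum_mem _ fun χ hχ => ?_
    rcases Finset.mem_insert.mp hχ with rfl | hχR
    · exact hPle 0 (Finset.mem_insert_self _ _) (hv _ hχ)
    · by_cases hSs : χ ∈ Ss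
      · exact hPle χ (Finset.mem_insert_of_mem hSs) (hv χ hχ)
      · have hχ0 : χ ≠ 0 := by rintro rfl; exact h0R hχR
        obtain ⟨h, hh⟩ : ∃ h : H, χ h ≠ 0 := by
          by_contra hc; push_neg at hc
          exact hχ0 (LinearMap.ext hc)
        have hhP : (h : L) ∈ P := hPle 0 (Finset.mem_insert_self _ _) (hH0 h.2)
        have hb : ⁅v χ, (h : L)⁆ ∈ P := hcomp χ hχ _ hhP
        have heq : ⁅v χ, (h : L)⁆ = (-(χ h)) • v χ := by
          rw [← lie_skew, hv χ hχ h, neg_smul]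
        rw [heq] at hb
        have hvP : v χ ∈ P := by
          have h2 := P.smul_mem (-(χ h))⁻¹ hb
          rwa [inv_smul_smul₀ (neg_ne_zero.mpr hh)] at h2
        have hz : v χ = 0 := by
          refine wt_indep H (insert 0 Ss) ?_ (hv χ hχ) (by rw [← hPw]; exact hvP)
          rw [Finset.mem_insert]
          push_neg
          exact ⟨hχ0, hSs⟩
        rw [hz]; exact P.zero_mem
  · intro hyP p hp
    rw [hPw] at hyP hp
    obtain ⟨v, hv, rfl⟩ := mem_bsup _ _ hyP
    obtain ⟨w, hw, rfl⟩ := mem_bsup _ _ hp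
    rw [sum_lie']
    refine Submodule.sum_mem _ fun χ hχ => ?_
    rw [lie_sum']
    refine Submodule.sum_mem _ fun ψ hψ => ?_
    have hmem := wt_lie (hv χ hχ) (hw ψ hψ)
    by_cases hin : χ + ψ ∈ insert (0 : Module.Dual ℂ H) Ss
    · exact hPle _ hin hmem
    · by_cases hR2 : χ + ψ ∈ insert (0 : Module.Dual ℂ H) R
      · exfalso
        have hne0 : χ + ψ ≠ 0 := fun hc => hin (hc ▸ Finset.mem_insert_self _ _)
        have hRmem : χ + ψ ∈ R := by
          rcases Finset.mem_insert.mp hR2 with h' | h'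
          · exact absurd h' hne0
          · exact h'
        have hnotSs : χ + ψ ∉ Ss := fun hc => hin (Finset.mem_insert_of_mem hc)
        have hlt : ((χ + ψ) x).re < 0 :=
          lt_of_not_ge fun hge => hnotSs ((hpar _ hRmem).mpr hge)
        have hχge : 0 ≤ (χ x).re := by
          rcases Finset.mem_insert.mp hχ with rfl | hχSs
          · simp
          · exact (hpar χ (hSR hχSs)).mp hχSs
        have hψge : 0 ≤ (ψ x).re := by
          rcases Finset.mem_insert.mp hψ with rfl | hψSs
          · simp
          · exact (hpar ψ (hSR hψSs)).mp hψSs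
        have hre : ((χ + ψ) x).re = (χ x).re + (ψ x).re := by
          rw [LinearMap.add_apply, Complex.add_re]
        linarith
      · have h0 : ⁅v χ, w ψ⁆ = 0 :=
          wt_indep H (insert 0 R) hR2 hmem (by rw [← hTw]; trivial)
        rw [h0]; exact P.zero_mem
end

section
/- In the semidirect product 𝔤 = 𝔰𝔩₂(ℂ) ⋉ ℂ², formed with the standard representation of 𝔰𝔩₂(ℂ), let 𝔲 = 𝔤_α ⊕ 𝔤_{2α} be the sum of the weight spaces for the positive weights (where 𝔤_{2α} is the upper-triangular nilpotent part of 𝔰𝔩₂ and 𝔤_α = ℂe₁ ⊆ ℂ²). Then the normalizer of 𝔲 in 𝔤 strictly contains the parabolic subalgebra 𝔭 = 𝔥 ⊕ 𝔤_α ⊕ 𝔤_{2α}; in fact n_𝔤(𝔲) = 𝔤_{−α} ⊕ 𝔥 ⊕ 𝔤_α ⊕ 𝔤_{2α}. -/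
noncomputable section

/-- The Lie algebra `𝔰𝔩₂(ℂ) ⋉ ℂ²`, realized as the 3×3 complex matrices whose bottom
row vanishes and whose top-left 2×2 block is trace free. -/
def LS : Submodule ℂ (Matrix (Fin 3) (Fin 3) ℂ) where
  carrier := {A | (∀ j, A 2 j = 0) ∧ A 0 0 + A 1 1 = 0}
  add_mem' := by
    rintro a b ⟨ha1, ha2⟩ ⟨hb1, hb2⟩
    refine ⟨fun j => ?_, ?_⟩
    · simp [Matrix.add_apply, ha1 j, hb1 j]
    · simp only [Matrix.add_apply]
      linear_combination ha2 + hb2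
  zero_mem' := by
    refine ⟨fun j => rfl, ?_⟩
    simp
  smul_mem' := by
    rintro c a ⟨ha1, ha2⟩
    refine ⟨fun j => ?_, ?_⟩
    · simp [Matrix.smul_apply, ha1 j]
    · simp only [Matrix.smul_apply, smul_eq_mul]
      linear_combination c * ha2

/-- The coroot element `h = diag(1, -1, 0)`. -/
def h0 : Matrix (Fin 3) (Fin 3) ℂ := !![1, 0, 0; 0, -1, 0; 0, 0, 0]

/-- The `c`-eigenspace of `ad h0` inside `LS`. -/
def Wc (c : ℂ) : Submodule ℂ (Matrix (Fin 3) (Fin 3) ℂ) where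
  carrier := {A | A ∈ LS ∧ ⁅h0, A⁆ = c • A}
  add_mem' := by
    rintro a b ⟨ha1, ha2⟩ ⟨hb1, hb2⟩
    refine ⟨LS.add_mem ha1 hb1, ?_⟩
    have e : ⁅h0, a + b⁆ = ⁅h0, a⁆ + ⁅h0, b⁆ := by
      change h0 * (a + b) - (a + b) * h0 = (h0 * a - a * h0) + (h0 * b - b * h0)
      noncomm_ring
    rw [e, ha2, hb2, smul_add]
  zero_mem' := ⟨LS.zero_mem, by show h0 * 0 - 0 * h0 = c • 0; simp⟩
  smul_mem' := by
    rintro t a ⟨ha1, ha2⟩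
    refine ⟨LS.smul_mem t ha1, ?_⟩
    have e : ⁅h0, t • a⁆ = t • ⁅h0, a⁆ := by
      change h0 * (t • a) - (t • a) * h0 = t • (h0 * a - a * h0)
      rw [mul_smul_comm, smul_mul_assoc, smul_sub]
    rw [e, ha2]
    exact smul_comm t c a

-- helpers
def dd : Fin 3 → ℂ := ![1, -1, 0]

lemma lie_h0_apply (A : Matrix (Fin 3) (Fin 3) ℂ) (i j : Fin 3) :
    ⁅h0, A⁆ i j = (dd i - dd j) * A i j := by
  simp only [Ring.lie_def, Matrix.sub_apply, Matrix.mul_apply, Fin.sum_univ_three]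
  fin_cases i <;> fin_cases j <;> norm_num [h0, dd, Matrix.cons_val_two, Matrix.vecHead, Matrix.vecTail] <;> ring

lemma mem_Wc_iff (c : ℂ) (A : Matrix (Fin 3) (Fin 3) ℂ) :
    A ∈ Wc c ↔ A ∈ LS ∧ ∀ i j, (dd i - dd j) * A i j = c * A i j := by
  constructor
  · rintro ⟨h1, h2⟩
    refine ⟨h1, fun i j => ?_⟩
    rw [← lie_h0_apply, h2]; simp
  · rintro ⟨h1, h2⟩
    refine ⟨h1, ?_⟩
    ext i j
    rw [lie_h0_apply, h2]; simp

lemma Wc_apply_eq_zero {c : ℂ} {A : Matrix (Fin 3) (Fin 3) ℂ} (h : A ∈ Wc c)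
    (i j : Fin 3) (hne : dd i - dd j ≠ c) : A i j = 0 := by
  have := ((mem_Wc_iff c A).1 h).2 i j
  have h2 : (dd i - dd j - c) * A i j = 0 := by linear_combination this
  rcases mul_eq_zero.1 h2 with h3 | h3
  · exact absurd (sub_eq_zero.1 h3) hne
  · exact h3

def M01 : Matrix (Fin 3) (Fin 3) ℂ := !![0,1,0;0,0,0;0,0,0]
def M02 : Matrix (Fin 3) (Fin 3) ℂ := !![0,0,1;0,0,0;0,0,0]
def M12 : Matrix (Fin 3) (Fin 3) ℂ := !![0,0,0;0,0,1;0,0,0]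

lemma M01_mem : M01 ∈ Wc 2 := by
  rw [mem_Wc_iff]
  refine ⟨⟨fun j => by fin_cases j <;> rfl, by norm_num [M01]⟩, fun i j => ?_⟩
  fin_cases i <;> fin_cases j <;> norm_num [M01, dd, Matrix.vecHead, Matrix.vecTail]

lemma M02_mem : M02 ∈ Wc 1 := by
  rw [mem_Wc_iff]
  refine ⟨⟨fun j => by fin_cases j <;> rfl, by norm_num [M02]⟩, fun i j => ?_⟩
  fin_cases i <;> fin_cases j <;> norm_num [M02, dd, Matrix.vecHead, Matrix.vecTail]

lemma M12_mem : M12 ∈ Wc (-1) := by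
  rw [mem_Wc_iff]
  refine ⟨⟨fun j => by fin_cases j <;> rfl, by norm_num [M12]⟩, fun i j => ?_⟩
  fin_cases i <;> fin_cases j <;> norm_num [M12, dd, Matrix.vecHead, Matrix.vecTail]

lemma h0_mem : h0 ∈ Wc 0 := by
  rw [mem_Wc_iff]
  refine ⟨⟨fun j => by fin_cases j <;> rfl, by norm_num [h0]⟩, fun i j => ?_⟩
  fin_cases i <;> fin_cases j <;> norm_num [h0, dd, Matrix.vecHead, Matrix.vecTail]

lemma mem_U_iff (A : Matrix (Fin 3) (Fin 3) ℂ) :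
    A ∈ Wc 1 ⊔ Wc 2 ↔ (A 0 0 = 0 ∧ A 1 0 = 0 ∧ A 1 1 = 0 ∧ A 1 2 = 0 ∧
      A 2 0 = 0 ∧ A 2 1 = 0 ∧ A 2 2 = 0) := by
  constructor
  · intro hA
    rcases Submodule.mem_sup.1 hA with ⟨y, hy, z, hz, rfl⟩
    have hy' : ∀ i j, dd i - dd j ≠ 1 → y i j = 0 := fun i j => Wc_apply_eq_zero hy i j
    have hz' : ∀ i j, dd i - dd j ≠ 2 → z i j = 0 := fun i j => Wc_apply_eq_zero hz i j
    refine ⟨?_, ?_, ?_, ?_, ?_, ?_, ?_⟩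
    · rw [Matrix.add_apply, hy' _ _ (by norm_num [dd]), hz' _ _ (by norm_num [dd]), add_zero]
    · rw [Matrix.add_apply, hy' _ _ (by norm_num [dd]), hz' _ _ (by norm_num [dd]), add_zero]
    · rw [Matrix.add_apply, hy' _ _ (by norm_num [dd]), hz' _ _ (by norm_num [dd]), add_zero]
    · rw [Matrix.add_apply, hy' _ _ (by norm_num [dd, Matrix.cons_val_two]), hz' _ _ (by norm_num [dd, Matrix.cons_val_two]), add_zero]
    all_goals rw [Matrix.add_apply, hy.1.1, hz.1.1, add_zero]
  · rintro ⟨h1, h2, h3, h4, h5, h6, h7⟩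
    have hA : A = A 0 2 • M02 + A 0 1 • M01 := by
      ext i j
      fin_cases i <;> fin_cases j <;>
        simp [M01, M02, h1, h2, h3, h4, h5, h6, h7, Matrix.vecHead, Matrix.vecTail]
    rw [hA]
    exact Submodule.add_mem _
      (Submodule.mem_sup_left ((Wc 1).smul_mem _ M02_mem))
      (Submodule.mem_sup_right ((Wc 2).smul_mem _ M01_mem))

lemma Wc_le_LS (c : ℂ) : Wc c ≤ LS := fun _ h => h.1

lemma mem_N_iff (A : Matrix (Fin 3) (Fin 3) ℂ) :
    A ∈ Wc (-1) ⊔ Wc 0 ⊔ Wc 1 ⊔ Wc 2 ↔ A ∈ LS ∧ A 1 0 = 0 := by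
  constructor
  · intro hA
    rcases Submodule.mem_sup.1 hA with ⟨x, hx, d, hd, rfl⟩
    rcases Submodule.mem_sup.1 hx with ⟨y, hy, c, hc, rfl⟩
    rcases Submodule.mem_sup.1 hy with ⟨a, ha, b, hb, rfl⟩
    refine ⟨LS.add_mem (LS.add_mem (LS.add_mem ha.1 hb.1) hc.1) hd.1, ?_⟩
    simp only [Matrix.add_apply]
    rw [Wc_apply_eq_zero ha 1 0 (by norm_num [dd]),
      Wc_apply_eq_zero hb 1 0 (by norm_num [dd]),
      Wc_apply_eq_zero hc 1 0 (by norm_num [dd]),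
      Wc_apply_eq_zero hd 1 0 (by norm_num [dd])]
    ring
  · rintro ⟨⟨hA1, hA2⟩, h10⟩
    have hA : A = A 1 2 • M12 + A 0 0 • h0 + A 0 2 • M02 + A 0 1 • M01 := by
      ext i j
      fin_cases i <;> fin_cases j <;>
        simp [M01, M02, M12, h0, h10, hA1 0, hA1 1, hA1 2,
          Matrix.vecHead, Matrix.vecTail] <;>
        first
        | linear_combination -hA2
        | linear_combination (-2 : ℂ) * hA2
        | linear_combination hA2
        | ring
    rw [hA]
    refine Submodule.add_mem _ (Submodule.add_mem _ (Submodule.add_mem _ ?_ ?_) ?_) ?_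
    · exact Submodule.mem_sup_left <| Submodule.mem_sup_left <| Submodule.mem_sup_left <|
        (Wc (-1)).smul_mem _ M12_mem
    · exact Submodule.mem_sup_left <| Submodule.mem_sup_left <| Submodule.mem_sup_right <|
        (Wc 0).smul_mem _ h0_mem
    · exact Submodule.mem_sup_left <| Submodule.mem_sup_right <| (Wc 1).smul_mem _ M02_mem
    · exact Submodule.mem_sup_right <| (Wc 2).smul_mem _ M01_mem

/-- In `𝔤 = 𝔰𝔩₂(ℂ) ⋉ ℂ²`, with `𝔲 = 𝔤_α ⊕ 𝔤_{2α}`, the normalizer of `𝔲`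
in `𝔤` equals `𝔤_{-α} ⊕ 𝔥 ⊕ 𝔤_α ⊕ 𝔤_{2α}` (here `𝔥 = Wc 0`), and it strictly contains the
parabolic subalgebra `𝔭 = 𝔥 ⊕ 𝔤_α ⊕ 𝔤_{2α}`. -/
theorem stmt4 :
    (∀ A ∈ LS, ((∀ B ∈ Wc 1 ⊔ Wc 2, ⁅A, B⁆ ∈ Wc 1 ⊔ Wc 2) ↔
        A ∈ Wc (-1) ⊔ Wc 0 ⊔ Wc 1 ⊔ Wc 2)) ∧
      Wc 0 ⊔ Wc 1 ⊔ Wc 2 < Wc (-1) ⊔ Wc 0 ⊔ Wc 1 ⊔ Wc 2 := by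
  constructor
  · intro A hA
    constructor
    · intro hnorm
      rw [mem_N_iff]
      refine ⟨hA, ?_⟩
      have h1 : M01 ∈ Wc 1 ⊔ Wc 2 := Submodule.mem_sup_right M01_mem
      have h2 := ((mem_U_iff _).1 (hnorm M01 h1)).2.2.1
      have h3 : ⁅A, M01⁆ 1 1 = A 1 0 := by
        simp only [Ring.lie_def, Matrix.sub_apply, Matrix.mul_apply, Fin.sum_univ_three]
        norm_num [M01, Matrix.cons_val_two, Matrix.vecHead, Matrix.vecTail]
      rw [h3] at h2
      exact h2
    · intro hN B hB
      obtain ⟨⟨hA1, hA2⟩, h10⟩ := (mem_N_iff A).1 hN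
      obtain ⟨b1, b2, b3, b4, b5, b6, b7⟩ := (mem_U_iff B).1 hB
      rw [mem_U_iff]
      refine ⟨?_, ?_, ?_, ?_, ?_, ?_, ?_⟩ <;>
        simp [Ring.lie_def, Matrix.sub_apply, Matrix.mul_apply, Fin.sum_univ_three,
          b1, b2, b3, b4, b5, b6, b7, h10, hA1 0, hA1 1, hA1 2]
  · rw [lt_iff_le_and_ne]
    constructor
    · have h1 : Wc 0 ≤ Wc (-1) ⊔ Wc 0 := le_sup_right
      exact sup_le_sup_right (sup_le_sup_right h1 _) _
    · intro heq
      have h12 : M12 ∈ Wc 0 ⊔ Wc 1 ⊔ Wc 2 := by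
        rw [heq]
        exact (mem_N_iff M12).2 ⟨⟨fun j => by fin_cases j <;> rfl, by norm_num [M12]⟩, rfl⟩
      rcases Submodule.mem_sup.1 h12 with ⟨y, hy, c, hc, hyc⟩
      rcases Submodule.mem_sup.1 hy with ⟨a, ha, b, hb, rfl⟩
      have : M12 1 2 = 0 := by
        rw [← hyc]
        simp only [Matrix.add_apply]
        rw [Wc_apply_eq_zero ha 1 2 (by norm_num [dd, Matrix.cons_val_two]),
          Wc_apply_eq_zero hb 1 2 (by norm_num [dd, Matrix.cons_val_two]),
          Wc_apply_eq_zero hc 1 2 (by norm_num [dd, Matrix.cons_val_two])]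
        ring
      simp [M12] at this

end
end

section
/- Let H ≅ (ℂ^×)^r be a complex torus and (π,V) a holomorphic Banach representation of H (a morphism of Banach–Lie groups π : H → GL(V)). Then the set 𝒫(V,𝔥) of 𝔥-weights occurring in V is finite, and V decomposes as the direct sum V = ⊕_{β∈𝔥*} V_β(𝔥) of finitely many weight spaces. -/
set_option linter.unusedSectionVars false

noncomputable section
namespace S16

open Complex MeasureTheory intervalIntegral Set Filter Topology Metric Function

/-- Point on the unit circle as a unit of `ℂ`. -/
def cu (θ : ℝ) : ℂˣ := Units.mk0 (Complex.exp (θ * I)) (Complex.exp_ne_zero _)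

@[simp] lemma cu_coe (θ : ℝ) : (cu θ : ℂ) = Complex.exp (θ * I) := rfl

lemma cu_add (a b : ℝ) : cu (a + b) = cu a * cu b := by
  ext; simp [cu, ← Complex.exp_add]; ring_nf

lemma cu_zero : cu 0 = 1 := by ext; simp [cu]

lemma cu_periodic : Function.Periodic cu (2 * Real.pi) := by
  intro θ
  ext
  show Complex.exp _ = Complex.exp _
  push_cast
  rw [add_mul, Complex.exp_add]
  simp [Complex.exp_two_pi_mul_I]

/-- `∫_0^{2π} e^{ikθ} dθ`. -/
lemma intExp (k : ℤ) :
    (∫ θ in (0:ℝ)..(2*Real.pi), Complex.exp ((k:ℂ) * θ * I)) =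
      if k = 0 then ((2*Real.pi : ℝ) : ℂ) else 0 := by
  rcases eq_or_ne k 0 with hk | hk
  · simp [hk]
  · have hc : (k : ℂ) * I ≠ 0 := by
      simp [Complex.ext_iff, hk]
    have : ∀ θ : ℝ, Complex.exp ((k:ℂ) * θ * I) = Complex.exp (((k:ℂ) * I) * θ) := by
      intro θ; ring_nf
    simp only [this]
    rw [integral_exp_mul_complex hc]
    have h1 : (k : ℂ) * I * ((2*Real.pi : ℝ):ℂ) = (k : ℂ) * (2 * Real.pi * I) := by
      push_cast; ring
    have h2 : Complex.exp ((k:ℂ) * (2 * Real.pi * I)) = 1 :=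
      Complex.exp_int_mul_two_pi_mul_I k
    push_cast
    rw [show (k : ℂ) * I * (2 * (Real.pi:ℂ)) = (k:ℂ) * (2 * (Real.pi:ℂ) * I) by ring, h2]
    simp [hk]

variable {E : Type*} [NormedRing E] [NormedAlgebra ℂ E] [CompleteSpace E]

lemma mul_intervalIntegral (a : E) {f : ℝ → E} {x y : ℝ}
    (hf : IntervalIntegrable f volume x y) :
    a * ∫ θ in x..y, f θ = ∫ θ in x..y, a * f θ :=
  ((ContinuousLinearMap.mul ℂ E a).intervalIntegral_comp_comm hf).symm

lemma intervalIntegral_mul (a : E) {f : ℝ → E} {x y : ℝ}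
    (hf : IntervalIntegrable f volume x y) :
    (∫ θ in x..y, f θ) * a = ∫ θ in x..y, f θ * a :=
  (((ContinuousLinearMap.mul ℂ E).flip a).intervalIntegral_comp_comm hf).symm

section OneVar

variable (ψ : ℂˣ →* E) (G : ℂ → E)

/-- The `n`-th Fourier coefficient (times `2π`) of a one-parameter representation. -/
def Q (n : ℤ) : E := ∫ θ in (0:ℝ)..(2*Real.pi), Complex.exp (-(n:ℂ) * θ * I) • ψ (cu θ)

variable (hG : AnalyticOnNhd ℂ G {z : ℂ | z ≠ 0}) (hGψ : ∀ u : ℂˣ, G u = ψ u)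

include hG hGψ in
lemma cont_psi_cu : Continuous fun θ : ℝ => (ψ (cu θ) : E) := by
  have h1 : (fun θ : ℝ => (ψ (cu θ) : E)) = fun θ : ℝ => G (Complex.exp (θ * I)) := by
    funext θ; exact (hGψ (cu θ)).symm
  rw [h1]
  apply hG.continuousOn.comp_continuous
  · exact Complex.continuous_exp.comp (Complex.continuous_ofReal.mul continuous_const)
  · intro θ; exact Complex.exp_ne_zero _

include hG hGψ in
lemma integrable_cexp_psi (c : ℝ → ℂ) (hc : Continuous c) (x y : ℝ) :
    IntervalIntegrable (fun θ => c θ • (ψ (cu θ) : E)) volume x y :=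
  (hc.smul (cont_psi_cu ψ G hG hGψ)).intervalIntegrable x y


include hG hGψ in
lemma psi_mul_Q (α : ℝ) (n : ℤ) :
    (ψ (cu α) : E) * Q ψ n = Complex.exp ((n:ℂ) * α * I) • Q ψ n := by
  set f : ℝ → E := fun u =>
    Complex.exp ((n:ℂ) * α * I) • (Complex.exp (-(n:ℂ) * u * I) • (ψ (cu u) : E)) with hf
  have hfper : Function.Periodic f (2 * Real.pi) := by
    intro u
    simp only [hf]
    congr 1
    · congr 1
      · push_cast
        rw [show -(n:ℂ) * (u + 2*Real.pi) * I = -(n:ℂ)*u*I + (-n:ℤ) * (2*Real.pi*I) by push_cast; ring,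
          Complex.exp_add, Complex.exp_int_mul_two_pi_mul_I, mul_one]
      · rw [cu_periodic u]
  have hfc : Continuous f := by
    apply Continuous.smul continuous_const
    apply Continuous.smul _ (cont_psi_cu ψ G hG hGψ)
    fun_prop
  have h1 : (ψ (cu α) : E) * Q ψ n
      = ∫ θ in (0:ℝ)..(2*Real.pi), Complex.exp (-(n:ℂ) * θ * I) • ((ψ (cu α) : E) * ψ (cu θ)) := by
    rw [Q, mul_intervalIntegral _ (integrable_cexp_psi ψ G hG hGψ _ (by fun_prop) _ _)]
    congr 1; funext θ; rw [mul_smul_comm]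
  have h2 : ∀ θ : ℝ, Complex.exp (-(n:ℂ) * θ * I) • ((ψ (cu α) : E) * ψ (cu θ)) = f (α + θ) := by
    intro θ
    rw [hf]
    simp only [← map_mul, ← cu_add]
    rw [smul_smul, ← Complex.exp_add]
    congr 2
    push_cast; ring
  rw [h1]
  simp only [h2]
  rw [intervalIntegral.integral_comp_add_left f α]
  have := hfper.intervalIntegral_add_eq α 0
  simp only [zero_add, add_zero] at this ⊢
  rw [this, hf]
  rw [intervalIntegral.integral_smul, Q]

include hG hGψ in
lemma commute_Q (a : E) (h : ∀ θ : ℝ, a * ψ (cu θ) = ψ (cu θ) * a) (n : ℤ) :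
    a * Q ψ n = Q ψ n * a := by
  rw [Q, mul_intervalIntegral _ (integrable_cexp_psi ψ G hG hGψ _ (by fun_prop) _ _),
    intervalIntegral_mul _ (integrable_cexp_psi ψ G hG hGψ _ (by fun_prop) _ _)]
  congr 1; funext θ
  rw [mul_smul_comm, smul_mul_assoc, h θ]


end OneVar

lemma zpow_analyticOnNhd (n : ℤ) :
    AnalyticOnNhd ℂ (fun w : ℂ => w ^ n) {z : ℂ | z ≠ 0} := by
  cases n with
  | ofNat m =>
      simpa using ((analyticOnNhd_id (𝕜 := ℂ) (E := ℂ) (s := {z : ℂ | z ≠ 0})).fun_pow m)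
  | negSucc m =>
      have h := ((analyticOnNhd_id (𝕜 := ℂ) (E := ℂ) (s := {z : ℂ | z ≠ 0})).fun_pow (m+1)).fun_inv
        (fun x hx => pow_ne_zero _ hx)
      simpa [zpow_negSucc] using h

lemma preconn : IsPreconnected {z : ℂ | z ≠ 0} := by
  have h : ({0}ᶜ : Set ℂ) = {z : ℂ | z ≠ 0} := by ext; simp
  rw [← h]
  exact (isConnected_compl_singleton_of_one_lt_rank
    (by rw [Complex.rank_real_complex]; norm_num) 0).isPreconnected

lemma freq_circle (p : ℂ → Prop) (hp : ∀ θ : ℝ, p (Complex.exp (θ * I))) :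
    ∃ᶠ z in 𝓝[≠] (1:ℂ), p z := by
  have hseq : Tendsto (fun k : ℕ => Complex.exp ((1/(k+1) : ℝ) * I)) atTop (𝓝[≠] (1:ℂ)) := by
    apply tendsto_nhdsWithin_of_tendsto_nhds_of_eventually_within
    · have h0 : Tendsto (fun k : ℕ => (1/(k+1) : ℝ)) atTop (𝓝 0) :=
        tendsto_one_div_add_atTop_nhds_zero_nat
      have hcont : Continuous (fun x : ℝ => Complex.exp ((x:ℂ) * I)) :=
        Complex.continuous_exp.comp (Complex.continuous_ofReal.mul continuous_const)
      have h1 := (hcont.tendsto 0).comp h0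
      simpa [Function.comp_def] using h1
    · apply Eventually.of_forall
      intro k
      simp only [mem_compl_iff, mem_singleton_iff]
      intro h
      rw [Complex.exp_eq_one_iff] at h
      obtain ⟨m, hm⟩ := h
      have hI : ((1/(k+1) : ℝ) : ℂ) = ((m * (2*Real.pi) : ℝ) : ℂ) := by
        apply mul_right_cancel₀ Complex.I_ne_zero
        rw [hm]; push_cast; ring
      have hr : (1/(k+1) : ℝ) = m * (2*Real.pi) := Complex.ofReal_injective hI
      have hπ := Real.pi_gt_three
      have hk0 : (0:ℝ) < 1/(k+1) := by positivity
      have hk1 : (1/(k+1) : ℝ) ≤ 1 := by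
        rw [div_le_one (by positivity)]; linarith [Nat.cast_nonneg (α := ℝ) k]
      rcases le_or_gt (m:ℝ) 0 with h' | h'
      · nlinarith
      · have : (1:ℝ) ≤ m := by exact_mod_cast h'
        nlinarith
  exact hseq.frequently (Frequently.of_forall fun k => hp _)

section OneVar2

variable (ψ : ℂˣ →* E) (G : ℂ → E)
variable (hG : AnalyticOnNhd ℂ G {z : ℂ | z ≠ 0}) (hGψ : ∀ u : ℂˣ, G u = ψ u)

include hG hGψ in
lemma G_mul_Q (n : ℤ) : ∀ w : ℂ, w ≠ 0 → G w * Q ψ n = w ^ n • Q ψ n := by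
  have h1 : AnalyticOnNhd ℂ (fun w => G w * Q ψ n) {z : ℂ | z ≠ 0} :=
    hG.mul analyticOnNhd_const
  have h2 : AnalyticOnNhd ℂ (fun w : ℂ => w ^ n • Q ψ n) {z : ℂ | z ≠ 0} :=
    (zpow_analyticOnNhd n).smul analyticOnNhd_const
  intro w hw
  refine h1.eqOn_of_preconnected_of_frequently_eq h2 preconn (z₀ := 1)
    (by simp) ?_ hw
  apply freq_circle
  intro θ
  have hc : Complex.exp (θ * I) = ((cu θ : ℂˣ) : ℂ) := rfl
  show G (Complex.exp (θ * I)) * Q ψ n = (Complex.exp (θ * I)) ^ n • Q ψ n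
  rw [hc, hGψ, psi_mul_Q ψ G hG hGψ]
  congr 1
  rw [cu_coe, ← Complex.exp_int_mul (θ * I) n]
  ring_nf

/-- The unit `2`. -/
def u2 : ℂˣ := Units.mk0 2 two_ne_zero

/-- Bound for the support of the Fourier coefficients. -/
def NN (ψ : ℂˣ →* E) : ℕ := ⌈max ‖(ψ u2 : E)‖ ‖(ψ u2⁻¹ : E)‖⌉₊

include hG hGψ in
lemma Q_vanish (n : ℤ) (hn : (NN ψ : ℤ) < |n|) : Q ψ n = 0 := by
  set C := max ‖(ψ u2 : E)‖ ‖(ψ u2⁻¹ : E)‖ with hCdef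
  obtain ⟨w, hwC, hwn⟩ : ∃ w : ℂˣ, ‖(ψ w : E)‖ ≤ C ∧ ‖((w:ℂ))^n‖ = (2:ℝ)^(|n|) := by
    rcases le_or_gt 0 n with h | h
    · refine ⟨u2, le_max_left _ _, ?_⟩
      rw [norm_zpow, abs_of_nonneg h]
      norm_num [u2]
    · refine ⟨u2⁻¹, le_max_right _ _, ?_⟩
      rw [norm_zpow, abs_of_neg h]
      have : ((u2⁻¹ : ℂˣ) : ℂ) = 2⁻¹ := rfl
      have h2 : ‖(2⁻¹:ℂ)‖ = (2:ℝ)⁻¹ := by norm_num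
      rw [this, h2, inv_zpow, ← zpow_neg]
  have key := G_mul_Q ψ G hG hGψ n (w : ℂ) (Units.ne_zero w)
  rw [hGψ] at key
  have hnorm : ‖((w:ℂ))^n • Q ψ n‖ ≤ C * ‖Q ψ n‖ := by
    rw [← key]
    exact (norm_mul_le _ _).trans (by gcongr)
  rw [norm_smul, hwn] at hnorm
  have hgt : C < (2:ℝ)^(|n|) := by
    have h1 : C ≤ (NN ψ : ℝ) := Nat.le_ceil C
    set m : ℕ := (|n|).toNat with hm
    have hmn : (|n| : ℤ) = (m : ℤ) := (Int.toNat_of_nonneg (abs_nonneg n)).symm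
    have h2 : ((2:ℝ))^(|n|) = (2:ℝ)^(m:ℕ) := by rw [hmn, zpow_natCast]
    have h3 : (m:ℝ) < 2^(m:ℕ) := by exact_mod_cast Nat.lt_two_pow_self (n := m)
    have h4 : (NN ψ : ℝ) < m := by
      have : (NN ψ : ℤ) < (m:ℤ) := by omega
      exact_mod_cast this
    rw [h2]; linarith
  have hQ0 : ‖Q ψ n‖ = 0 := by nlinarith [norm_nonneg (Q ψ n)]
  exact norm_eq_zero.mp hQ0

end OneVar2

section Vanish
variable {F : Type*} [NormedAddCommGroup F] [NormedSpace ℂ F] [CompleteSpace F]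

lemma transport (f : ℂ → F) (hf : AnalyticOnNhd ℂ f {z : ℂ | z ≠ 0}) {ρ : ℝ}
    (h0 : 0 < ρ) (h1 : ρ ≤ 1) :
    (∮ z in C((0:ℂ), 1), f z) = ∮ z in C((0:ℂ), ρ), f z := by
  apply Complex.circleIntegral_eq_of_differentiable_on_annulus_off_countable h0 h1
    countable_empty
  · apply hf.continuousOn.mono
    intro z hz
    simp only [mem_diff, Metric.mem_closedBall, Metric.mem_ball, dist_zero_right] at hz
    intro h
    rw [h, norm_zero] at hz
    exact hz.2 h0
  · intro z hz
    refine (hf z ?_).differentiableAt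
    simp only [mem_diff, Metric.mem_ball, Metric.mem_closedBall, dist_zero_right] at hz
    intro h
    rw [h, norm_zero] at hz
    exact hz.1.2 h0.le

lemma circleIntegral_finset_sum {ι : Type*} (s : Finset ι) (f : ι → ℂ → F) (c : ℂ) (R : ℝ)
    (hf : ∀ i ∈ s, CircleIntegrable (f i) c R) :
    (∮ z in C(c, R), ∑ i ∈ s, f i z) = ∑ i ∈ s, ∮ z in C(c, R), f i z := by
  simp only [circleIntegral]
  rw [← intervalIntegral.integral_finset_sum (fun i hi => (hf i hi).out)]
  congr 1; funext θ
  rw [Finset.smul_sum]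

lemma eq_zero_of_norm_le_geom {x : F} {c q : ℝ} (hq0 : 0 ≤ q) (hq : q < 1)
    (h : ∀ K : ℕ, ‖x‖ ≤ c * q ^ K) : x = 0 := by
  have ht : Tendsto (fun K : ℕ => c * q ^ K) atTop (𝓝 0) := by
    simpa using (tendsto_pow_atTop_nhds_zero_of_lt_one hq0 hq).const_mul c
  have hx : ‖x‖ ≤ 0 := ge_of_tendsto ht (Eventually.of_forall h)
  simpa using le_antisymm hx (norm_nonneg x)

lemma telescope_out {w z : ℂ} (hz : z ≠ 0) (hzw : z ≠ w) (K : ℕ) :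
    (z - w)⁻¹ = (∑ k ∈ Finset.range K, w ^ k * (z ^ (k+1))⁻¹)
      + w ^ K * (z ^ K)⁻¹ * (z - w)⁻¹ := by
  have hsub : z - w ≠ 0 := sub_ne_zero.mpr hzw
  induction K with
  | zero => simp
  | succ K ih =>
      have hbase : (z - w)⁻¹ = z⁻¹ + w * z⁻¹ * (z - w)⁻¹ := by
        field_simp
        ring
      calc (z - w)⁻¹ = (∑ k ∈ Finset.range K, w ^ k * (z ^ (k+1))⁻¹)
            + w ^ K * (z ^ K)⁻¹ * (z - w)⁻¹ := ih
        _ = _ := by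
            rw [Finset.sum_range_succ, add_assoc]
            congr 1
            conv_lhs => rw [hbase]
            rw [pow_succ, pow_succ, mul_inv]
            ring

lemma telescope_in {w z : ℂ} (hw : w ≠ 0) (hzw : z ≠ w) (K : ℕ) :
    (z - w)⁻¹ = (∑ k ∈ Finset.range K, -((w ^ (k+1))⁻¹ * z ^ k))
      + z ^ K * (w ^ K)⁻¹ * (z - w)⁻¹ := by
  have hsub : z - w ≠ 0 := sub_ne_zero.mpr hzw
  induction K with
  | zero => simp
  | succ K ih =>
      have hbase : (z - w)⁻¹ = -w⁻¹ + z * w⁻¹ * (z - w)⁻¹ := by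
        field_simp
        ring
      calc (z - w)⁻¹ = (∑ k ∈ Finset.range K, -((w ^ (k+1))⁻¹ * z ^ k))
            + z ^ K * (w ^ K)⁻¹ * (z - w)⁻¹ := ih
        _ = _ := by
            rw [Finset.sum_range_succ, add_assoc]
            congr 1
            conv_lhs => rw [hbase]
            rw [pow_succ, pow_succ, mul_inv]
            ring


lemma circleIntegral_add {f g : ℂ → F} {c : ℂ} {R : ℝ} (hf : CircleIntegrable f c R)
    (hg : CircleIntegrable g c R) :
    (∮ z in C(c, R), (f z + g z)) = (∮ z in C(c, R), f z) + ∮ z in C(c, R), g z := by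
  simp only [circleIntegral, smul_add]
  exact intervalIntegral.integral_add hf.out hg.out

lemma outer_zero (g : ℂ → F) (hc : ContinuousOn g (sphere (0:ℂ) 1))
    (hmom : ∀ k : ℕ, (∮ z in C((0:ℂ),1), (z ^ (k+1))⁻¹ • g z) = 0)
    {w : ℂ} (hw : ‖w‖ < 1) :
    (∮ z in C((0:ℂ),1), (z - w)⁻¹ • g z) = 0 := by
  obtain ⟨M, hM⟩ := (isCompact_sphere (0:ℂ) 1).exists_bound_of_continuousOn hc
  have hM0 : 0 ≤ M := le_trans (norm_nonneg _) (hM 1 (by simp))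
  have hsp : ∀ z : ℂ, z ∈ sphere (0:ℂ) 1 → z ≠ 0 ∧ z ≠ w := by
    intro z hz
    rw [mem_sphere_zero_iff_norm] at hz
    constructor
    · intro h; rw [h, norm_zero] at hz; norm_num at hz
    · intro h; rw [h] at hz; exact absurd hz (ne_of_lt hw)
  have hwm : 0 < 1 - ‖w‖ := by linarith
  have hcontk : ∀ k : ℕ, ContinuousOn (fun z : ℂ => (z ^ (k+1))⁻¹ • g z) (sphere (0:ℂ) 1) := by
    intro k
    exact (((continuousOn_id.pow (k+1)).inv₀
      (fun z hz => pow_ne_zero _ (hsp z hz).1))).smul hc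
  have hcontrem : ∀ K : ℕ, ContinuousOn
      (fun z : ℂ => (w ^ K * (z ^ K)⁻¹ * (z - w)⁻¹) • g z) (sphere (0:ℂ) 1) := by
    intro K
    apply ContinuousOn.smul _ hc
    apply ContinuousOn.mul
    · exact continuousOn_const.mul ((continuousOn_id.pow K).inv₀
        (fun z hz => pow_ne_zero _ (hsp z hz).1))
    · exact ((continuousOn_id.sub continuousOn_const).inv₀
        (fun z hz => sub_ne_zero.mpr (hsp z hz).2))
  apply eq_zero_of_norm_le_geom (norm_nonneg w) hw
    (c := 2 * Real.pi * ((1 - ‖w‖)⁻¹ * M))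
  intro K
  have h1 : (∮ z in C((0:ℂ),1), (z - w)⁻¹ • g z)
      = ∮ z in C((0:ℂ),1),
          ((∑ k ∈ Finset.range K, w ^ k • ((z ^ (k+1))⁻¹ • g z))
            + (w ^ K * (z ^ K)⁻¹ * (z - w)⁻¹) • g z) := by
    apply circleIntegral.integral_congr (by norm_num)
    intro z hz
    obtain ⟨hz0, hzw⟩ := hsp z hz
    simp only [smul_smul]
    rw [← Finset.sum_smul, ← add_smul, ← telescope_out hz0 hzw K]
  have hik : ∀ k : ℕ, CircleIntegrable (fun z : ℂ => w ^ k • ((z ^ (k+1))⁻¹ • g z)) 0 1 :=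
    fun k => (continuousOn_const.smul (hcontk k)).circleIntegrable (by norm_num)
  have hisum : CircleIntegrable
      (fun z : ℂ => ∑ k ∈ Finset.range K, w ^ k • ((z ^ (k+1))⁻¹ • g z)) 0 1 := by
    apply ContinuousOn.circleIntegrable (by norm_num)
    apply continuousOn_finset_sum
    exact fun k _ => continuousOn_const.smul (hcontk k)
  have hirem : CircleIntegrable
      (fun z : ℂ => (w ^ K * (z ^ K)⁻¹ * (z - w)⁻¹) • g z) 0 1 :=
    (hcontrem K).circleIntegrable (by norm_num)
  rw [h1, circleIntegral_add hisum hirem,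
    circleIntegral_finset_sum _ _ _ _ (fun k _ => hik k)]
  have hz1 : ∀ k ∈ Finset.range K,
      (∮ z in C((0:ℂ),1), w ^ k • ((z ^ (k+1))⁻¹ • g z)) = 0 := by
    intro k _
    rw [circleIntegral.integral_smul, hmom k, smul_zero]
  rw [Finset.sum_congr rfl hz1, Finset.sum_const, smul_zero, zero_add]
  have hb := circleIntegral.norm_integral_le_of_norm_le_const (c := (0:ℂ))
    (R := (1:ℝ)) (C := ‖w‖ ^ K * ((1 - ‖w‖)⁻¹ * M)) (by norm_num)
    (f := fun z => (w ^ K * (z ^ K)⁻¹ * (z - w)⁻¹) • g z) ?_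
  · calc ‖∮ z in C((0:ℂ),1), (w ^ K * (z ^ K)⁻¹ * (z - w)⁻¹) • g z‖
        ≤ 2 * Real.pi * 1 * (‖w‖ ^ K * ((1 - ‖w‖)⁻¹ * M)) := hb
      _ = 2 * Real.pi * ((1 - ‖w‖)⁻¹ * M) * ‖w‖ ^ K := by ring
  · intro z hz
    have hzn : ‖z‖ = 1 := mem_sphere_zero_iff_norm.mp hz
    have hd : 1 - ‖w‖ ≤ ‖z - w‖ := by
      have := norm_sub_norm_le z w
      linarith [norm_sub_norm_le z w, hzn ▸ le_refl (1:ℝ)]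
    calc ‖(w ^ K * (z ^ K)⁻¹ * (z - w)⁻¹) • g z‖
        = ‖w‖ ^ K * ((‖z‖ ^ K)⁻¹ * (‖z - w‖⁻¹ * ‖g z‖)) := by
          rw [norm_smul, norm_mul, norm_mul, norm_pow, norm_inv, norm_inv, norm_pow]
          ring
      _ = ‖w‖ ^ K * (‖z - w‖⁻¹ * ‖g z‖) := by rw [hzn]; simp
      _ ≤ ‖w‖ ^ K * ((1 - ‖w‖)⁻¹ * M) := by
          apply mul_le_mul_of_nonneg_left _ (by positivity)
          apply mul_le_mul (inv_anti₀ hwm hd) (hM z hz) (norm_nonneg _)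
            (by positivity)


lemma inner_zero (g : ℂ → F) {ρ : ℝ} (hρ : 0 < ρ) (hc : ContinuousOn g (sphere (0:ℂ) ρ))
    (hmom : ∀ k : ℕ, (∮ z in C((0:ℂ),ρ), z ^ k • g z) = 0)
    {w : ℂ} (hw : ρ < ‖w‖) :
    (∮ z in C((0:ℂ),ρ), (z - w)⁻¹ • g z) = 0 := by
  obtain ⟨M, hM⟩ := (isCompact_sphere (0:ℂ) ρ).exists_bound_of_continuousOn hc
  have hw0 : w ≠ 0 := by
    intro h; rw [h, norm_zero] at hw; linarith
  have hwpos : 0 < ‖w‖ := lt_trans hρ hw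
  have hM0 : 0 ≤ M := by
    obtain ⟨z, hz⟩ : (sphere (0:ℂ) ρ).Nonempty := NormedSpace.sphere_nonempty.mpr hρ.le
    exact le_trans (norm_nonneg _) (hM z hz)
  have hsp : ∀ z : ℂ, z ∈ sphere (0:ℂ) ρ → z ≠ w := by
    intro z hz h
    rw [mem_sphere_zero_iff_norm] at hz
    rw [h] at hz; linarith [hz ▸ hw]
  have hwm : 0 < ‖w‖ - ρ := by linarith
  have hcontk : ∀ k : ℕ, ContinuousOn (fun z : ℂ => z ^ k • g z) (sphere (0:ℂ) ρ) :=
    fun k => (continuousOn_id.pow k).smul hc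
  have hcontrem : ∀ K : ℕ, ContinuousOn
      (fun z : ℂ => (z ^ K * (w ^ K)⁻¹ * (z - w)⁻¹) • g z) (sphere (0:ℂ) ρ) := by
    intro K
    apply ContinuousOn.smul _ hc
    apply ContinuousOn.mul
    · exact (continuousOn_id.pow K).mul continuousOn_const
    · exact ((continuousOn_id.sub continuousOn_const).inv₀
        (fun z hz => sub_ne_zero.mpr (hsp z hz)))
  have hq0 : 0 ≤ ρ / ‖w‖ := by positivity
  have hq1 : ρ / ‖w‖ < 1 := (div_lt_one hwpos).mpr hw
  apply eq_zero_of_norm_le_geom hq0 hq1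
    (c := 2 * Real.pi * ρ * ((‖w‖ - ρ)⁻¹ * M))
  intro K
  have h1 : (∮ z in C((0:ℂ),ρ), (z - w)⁻¹ • g z)
      = ∮ z in C((0:ℂ),ρ),
          ((∑ k ∈ Finset.range K, (-((w ^ (k+1))⁻¹)) • (z ^ k • g z))
            + (z ^ K * (w ^ K)⁻¹ * (z - w)⁻¹) • g z) := by
    apply circleIntegral.integral_congr hρ.le
    intro z hz
    simp only [smul_smul]
    rw [← Finset.sum_smul, ← add_smul]
    have := telescope_in (w := w) (z := z) hw0 (hsp z hz) K
    simp only [neg_mul] at this ⊢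
    rw [← this]
  have hik : ∀ k : ℕ, CircleIntegrable
      (fun z : ℂ => (-((w ^ (k+1))⁻¹)) • (z ^ k • g z)) 0 ρ :=
    fun k => (continuousOn_const.smul (hcontk k)).circleIntegrable hρ.le
  have hisum : CircleIntegrable
      (fun z : ℂ => ∑ k ∈ Finset.range K, (-((w ^ (k+1))⁻¹)) • (z ^ k • g z)) 0 ρ := by
    apply ContinuousOn.circleIntegrable hρ.le
    apply continuousOn_finset_sum
    exact fun k _ => continuousOn_const.smul (hcontk k)
  have hirem : CircleIntegrable
      (fun z : ℂ => (z ^ K * (w ^ K)⁻¹ * (z - w)⁻¹) • g z) 0 ρ :=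
    (hcontrem K).circleIntegrable hρ.le
  rw [h1, circleIntegral_add hisum hirem,
    circleIntegral_finset_sum _ _ _ _ (fun k _ => hik k)]
  have hz1 : ∀ k ∈ Finset.range K,
      (∮ z in C((0:ℂ),ρ), (-((w ^ (k+1))⁻¹)) • (z ^ k • g z)) = 0 := by
    intro k _
    rw [circleIntegral.integral_smul, hmom k, smul_zero]
  rw [Finset.sum_congr rfl hz1, Finset.sum_const, smul_zero, zero_add]
  have hb := circleIntegral.norm_integral_le_of_norm_le_const (c := (0:ℂ))
    (R := ρ) (C := (ρ / ‖w‖) ^ K * ((‖w‖ - ρ)⁻¹ * M)) hρ.le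
    (f := fun z => (z ^ K * (w ^ K)⁻¹ * (z - w)⁻¹) • g z) ?_
  · calc ‖∮ z in C((0:ℂ),ρ), (z ^ K * (w ^ K)⁻¹ * (z - w)⁻¹) • g z‖
        ≤ 2 * Real.pi * ρ * ((ρ / ‖w‖) ^ K * ((‖w‖ - ρ)⁻¹ * M)) := hb
      _ = 2 * Real.pi * ρ * ((‖w‖ - ρ)⁻¹ * M) * (ρ / ‖w‖) ^ K := by ring
  · intro z hz
    have hzn : ‖z‖ = ρ := mem_sphere_zero_iff_norm.mp hz
    have hd : ‖w‖ - ρ ≤ ‖z - w‖ := by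
      have h2 := norm_sub_norm_le w z
      have h3 : ‖w - z‖ = ‖z - w‖ := norm_sub_rev w z
      linarith [hzn ▸ h2]
    calc ‖(z ^ K * (w ^ K)⁻¹ * (z - w)⁻¹) • g z‖
        = ‖z‖ ^ K * (‖w‖ ^ K)⁻¹ * (‖z - w‖⁻¹ * ‖g z‖) := by
          simp only [norm_smul, norm_mul, norm_inv, norm_pow]
          ring
      _ = (ρ / ‖w‖) ^ K * (‖z - w‖⁻¹ * ‖g z‖) := by
          rw [hzn, div_pow, div_eq_mul_inv]
      _ ≤ (ρ / ‖w‖) ^ K * ((‖w‖ - ρ)⁻¹ * M) := by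
          apply mul_le_mul_of_nonneg_left _ (by positivity)
          exact mul_le_mul (inv_anti₀ hwm hd) (hM z hz) (norm_nonneg _)
            (by positivity)


lemma circleIntegral_pow_zero {k : ℕ} {ρ : ℝ} :
    (∮ z in C((0:ℂ), ρ), z ^ k) = 0 := by
  have h := circleIntegral.integral_sub_zpow_of_ne
    (n := (k:ℤ)) (by omega) 0 0 ρ
  simpa [zpow_natCast] using h

/-- If all moments of an analytic function on `ℂ ∖ {0}` over the unit circle vanish, the
function vanishes. -/
lemma vanish_of_moments (g : ℂ → F) (hg : AnalyticOnNhd ℂ g {z : ℂ | z ≠ 0})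
    (hm : ∀ m : ℤ, (∮ z in C((0:ℂ),1), z ^ m • g z) = 0) :
    ∀ w : ℂ, w ≠ 0 → g w = 0 := by
  have hzsmul : ∀ m : ℤ, AnalyticOnNhd ℂ (fun z : ℂ => z ^ m • g z) {z : ℂ | z ≠ 0} :=
    fun m => (zpow_analyticOnNhd m).smul hg
  have step1 : ∀ w : ℂ, w ≠ 0 → ‖w‖ < 1 → g w = 0 := by
    intro w hw0 hw1
    set ρ : ℝ := ‖w‖ / 2 with hρdef
    have hwpos : 0 < ‖w‖ := norm_pos_iff.mpr hw0
    have hρ0 : 0 < ρ := by positivity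
    have hρw : ρ < ‖w‖ := by rw [hρdef]; linarith
    have hρ1 : ρ ≤ 1 := by rw [hρdef]; linarith
    -- dslope is analytic on the punctured plane
    have hd : AnalyticOnNhd ℂ (dslope g w) {z : ℂ | z ≠ 0} := by
      intro z hz
      rcases eq_or_ne z w with rfl | hzw
      · obtain ⟨p, hp⟩ := hg z hz
        exact hp.has_fpower_series_dslope_fslope.analyticAt
      · have ha : AnalyticAt ℂ (fun y : ℂ => (y - w)⁻¹ • (g y - g w)) z := by
          apply AnalyticAt.smul
          · exact ((analyticAt_id.sub analyticAt_const).inv (sub_ne_zero.mpr hzw))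
          · exact (hg z hz).sub analyticAt_const
        apply ha.congr
        filter_upwards [eventually_ne_nhds hzw] with y hy
        rw [dslope_of_ne g hy, slope_def_module]
    -- spheres avoid 0 and w
    have hs1 : ∀ z : ℂ, z ∈ sphere (0:ℂ) 1 → z ≠ 0 ∧ z ≠ w := by
      intro z hz
      rw [mem_sphere_zero_iff_norm] at hz
      refine ⟨fun h => by rw [h, norm_zero] at hz; norm_num at hz,
        fun h => by rw [h] at hz; exact absurd hz (ne_of_lt hw1)⟩
    have hsρ : ∀ z : ℂ, z ∈ sphere (0:ℂ) ρ → z ≠ 0 ∧ z ≠ w := by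
      intro z hz
      rw [mem_sphere_zero_iff_norm] at hz
      refine ⟨fun h => by rw [h, norm_zero] at hz; linarith,
        fun h => by rw [h] at hz; linarith⟩
    -- continuity of g on the spheres
    have hgc1 : ContinuousOn g (sphere (0:ℂ) 1) :=
      hg.continuousOn.mono (fun z hz => (hs1 z hz).1)
    have hgcρ : ContinuousOn g (sphere (0:ℂ) ρ) :=
      hg.continuousOn.mono (fun z hz => (hsρ z hz).1)
    -- transport of the dslope integral
    have htrans : (∮ z in C((0:ℂ),1), dslope g w z) = ∮ z in C((0:ℂ),ρ), dslope g w z :=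
      transport _ hd hρ0 hρ1
    -- rewrite the outer integral
    have hint1a : CircleIntegrable (fun z : ℂ => (z - w)⁻¹ • g z) 0 1 := by
      apply ContinuousOn.circleIntegrable (by norm_num)
      exact (((continuousOn_id.sub continuousOn_const).inv₀
        (fun z hz => sub_ne_zero.mpr (hs1 z hz).2))).smul hgc1
    have hint1b : CircleIntegrable (fun z : ℂ => (z - w)⁻¹ • g w) 0 1 := by
      apply ContinuousOn.circleIntegrable (by norm_num)
      exact (((continuousOn_id.sub continuousOn_const).inv₀
        (fun z hz => sub_ne_zero.mpr (hs1 z hz).2))).smul continuousOn_const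
    have hintρa : CircleIntegrable (fun z : ℂ => (z - w)⁻¹ • g z) 0 ρ := by
      apply ContinuousOn.circleIntegrable hρ0.le
      exact (((continuousOn_id.sub continuousOn_const).inv₀
        (fun z hz => sub_ne_zero.mpr (hsρ z hz).2))).smul hgcρ
    have hintρb : CircleIntegrable (fun z : ℂ => (z - w)⁻¹ • g w) 0 ρ := by
      apply ContinuousOn.circleIntegrable hρ0.le
      exact (((continuousOn_id.sub continuousOn_const).inv₀
        (fun z hz => sub_ne_zero.mpr (hsρ z hz).2))).smul continuousOn_const
    have he1 : (∮ z in C((0:ℂ),1), dslope g w z)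
        = (∮ z in C((0:ℂ),1), (z - w)⁻¹ • g z) - ∮ z in C((0:ℂ),1), (z - w)⁻¹ • g w := by
      rw [← circleIntegral.integral_sub hint1a hint1b]
      apply circleIntegral.integral_congr (by norm_num)
      intro z hz
      rw [dslope_of_ne g (hs1 z hz).2, slope_def_module, smul_sub]
    have heρ : (∮ z in C((0:ℂ),ρ), dslope g w z)
        = (∮ z in C((0:ℂ),ρ), (z - w)⁻¹ • g z) - ∮ z in C((0:ℂ),ρ), (z - w)⁻¹ • g w := by
      rw [← circleIntegral.integral_sub hintρa hintρb]
      apply circleIntegral.integral_congr hρ0.le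
      intro z hz
      rw [dslope_of_ne g (hsρ z hz).2, slope_def_module, smul_sub]
    -- the four integrals
    have hA1 : (∮ z in C((0:ℂ),1), (z - w)⁻¹ • g z) = 0 := by
      apply outer_zero g hgc1 _ hw1
      intro k
      have h := hm (-(k+1) : ℤ)
      have : (fun z : ℂ => (z:ℂ) ^ (-(k+1) : ℤ) • g z)
          = fun z : ℂ => (z ^ (k+1))⁻¹ • g z := by
        funext z
        rw [zpow_neg, show ((k:ℤ)+1) = ((k+1:ℕ):ℤ) by push_cast; ring, zpow_natCast]
      rwa [this] at h
    have hB1 : (∮ z in C((0:ℂ),1), (z - w)⁻¹ • g w) = (2 * Real.pi * I) • g w := by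
      rw [circleIntegral.integral_smul_const (fun z => (z - w)⁻¹) (g w) 0 1,
        circleIntegral.integral_sub_inv_of_mem_ball (by simpa using hw1)]
    have hAρ : (∮ z in C((0:ℂ),ρ), (z - w)⁻¹ • g z) = 0 := by
      apply inner_zero g hρ0 hgcρ _ hρw
      intro k
      have h := transport (fun z : ℂ => z ^ (k:ℤ) • g z) (hzsmul k) hρ0 hρ1
      have hco : (fun z : ℂ => z ^ (k:ℤ) • g z) = fun z : ℂ => z ^ (k:ℕ) • g z := by
        funext z; rw [zpow_natCast]
      rw [hco] at h
      rw [← h]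
      have h2 := hm (k : ℤ)
      rwa [hco] at h2
    have hBρ : (∮ z in C((0:ℂ),ρ), (z - w)⁻¹ • g w) = 0 := by
      apply inner_zero (fun _ => g w) hρ0 continuousOn_const _ hρw
      intro k
      rw [circleIntegral.integral_smul_const (fun z => z ^ k) (g w) 0 ρ,
        circleIntegral_pow_zero, zero_smul]
    rw [he1, heρ, hA1, hB1, hAρ, hBρ] at htrans
    have h2πI : (2 * Real.pi * I : ℂ) ≠ 0 := by
      simp [Real.pi_ne_zero, Complex.I_ne_zero]
    have := htrans
    rw [zero_sub, sub_zero] at this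
    have hgw : (2 * Real.pi * I : ℂ) • g w = 0 := by
      rw [← neg_eq_zero, ← this]
    exact (smul_eq_zero.mp hgw).resolve_left h2πI
  -- extend to the whole punctured plane by the identity theorem
  intro w hw
  have heq : EqOn g 0 {z : ℂ | z ≠ 0} := by
    apply hg.eqOn_zero_of_preconnected_of_eventuallyEq_zero preconn
      (z₀ := (1/2 : ℂ)) (by norm_num)
    have hball : Metric.ball (1/2 : ℂ) (1/4) ∈ 𝓝 (1/2 : ℂ) :=
      Metric.ball_mem_nhds _ (by norm_num)
    filter_upwards [hball] with x hx
    rw [Metric.mem_ball, dist_eq_norm] at hx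
    have hhalf : ‖(1/2 : ℂ)‖ = 1/2 := by norm_num
    have hx1 : ‖x‖ < 1 := by
      calc ‖x‖ = ‖(x - 1/2) + 1/2‖ := by ring_nf
        _ ≤ ‖x - 1/2‖ + ‖(1/2:ℂ)‖ := norm_add_le _ _
        _ < 1 := by rw [hhalf]; linarith
    have hx0 : x ≠ 0 := by
      intro h
      rw [h, zero_sub, norm_neg, hhalf] at hx
      norm_num at hx
    exact step1 x hx0 hx1
  exact heq hw


lemma circleIntegral_zpow (j : ℤ) :
    (∮ z in C((0:ℂ),1), z ^ j) = if j = -1 then (2*Real.pi*I : ℂ) else 0 := by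
  rcases eq_or_ne j (-1) with rfl | hj
  · rw [if_pos rfl]
    have h := circleIntegral.integral_sub_inv_of_mem_ball
      (c := (0:ℂ)) (w := 0) (R := 1) (by simp)
    simpa using h
  · rw [if_neg hj]
    have h := circleIntegral.integral_sub_zpow_of_ne hj 0 0 1
    simpa using h

lemma moment_monomial (j : ℤ) (x : F) :
    (∮ z in C((0:ℂ),1), z ^ j • x) = (if j = -1 then (2*Real.pi*I : ℂ) else 0) • x := by
  rw [circleIntegral.integral_smul_const (fun z => z ^ j) x 0 1, circleIntegral_zpow]

end Vanish

section OneVar3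

variable (ψ : ℂˣ →* E) (G : ℂ → E)
variable (hG : AnalyticOnNhd ℂ G {z : ℂ | z ≠ 0}) (hGψ : ∀ u : ℂˣ, G u = ψ u)

include hG hGψ in
lemma moment_G (m : ℤ) : (∮ z in C((0:ℂ),1), z ^ m • G z) = I • Q ψ (-(m+1)) := by
  simp only [circleIntegral, deriv_circleMap, Q]
  rw [← intervalIntegral.integral_smul]
  apply intervalIntegral.integral_congr
  intro θ _
  dsimp only
  have hcm : circleMap 0 1 θ = Complex.exp (θ * I) := by simp [circleMap]
  have hG' : G (Complex.exp ((θ:ℝ) * I)) = ψ (cu θ) := hGψ (cu θ)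
  rw [hcm, hG', smul_smul, smul_smul]
  congr 1
  have he : Complex.exp ((θ:ℝ)*I) ≠ 0 := Complex.exp_ne_zero _
  rw [show -((-(m+1):ℤ):ℂ) * θ * I = ((m+1 : ℤ):ℂ) * ((θ:ℝ) * I) by push_cast; ring]
  rw [Complex.exp_int_mul, zpow_add_one₀ he]
  ring

include hG hGψ in
lemma sum_Q (M : ℕ) (hM : NN ψ ≤ M) :
    ∑ n ∈ Finset.Icc (-(M:ℤ)) (M:ℤ), Q ψ n = (((2*Real.pi:ℝ)):ℂ) • (1 : E) := by
  set tp : ℂ := ((2*Real.pi:ℝ):ℂ) with htpdef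
  have htp : tp ≠ 0 := by
    simp [htpdef, Real.pi_ne_zero]
  set s : Finset ℤ := Finset.Icc (-(M:ℤ)) (M:ℤ) with hsdef
  set g : ℂ → E := fun w => G w - tp⁻¹ • ∑ n ∈ s, w ^ n • Q ψ n with hgdef
  have hganal : AnalyticOnNhd ℂ g {z : ℂ | z ≠ 0} := by
    apply hG.sub
    have hsum : AnalyticOnNhd ℂ (fun w : ℂ => ∑ n ∈ s, w ^ n • Q ψ n) {z : ℂ | z ≠ 0} :=
      Finset.analyticOnNhd_fun_sum s
        (fun n _ => (zpow_analyticOnNhd n).smul analyticOnNhd_const)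
    exact analyticOnNhd_const.smul hsum
  have hGcont : ContinuousOn G (sphere (0:ℂ) 1) := by
    apply hG.continuousOn.mono
    intro z hz
    rw [mem_sphere_zero_iff_norm] at hz
    intro h; rw [h, norm_zero] at hz; norm_num at hz
  have hmom : ∀ m : ℤ, (∮ z in C((0:ℂ),1), z ^ m • g z) = 0 := by
    intro m
    have hsphere_ne : ∀ z : ℂ, z ∈ sphere (0:ℂ) 1 → z ≠ 0 := by
      intro z hz h
      rw [mem_sphere_zero_iff_norm, h, norm_zero] at hz; norm_num at hz
    have hint1 : CircleIntegrable (fun z : ℂ => z ^ m • G z) 0 1 := by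
      apply ContinuousOn.circleIntegrable (by norm_num)
      exact (((continuousOn_id.zpow₀ m (fun z hz => Or.inl (hsphere_ne z hz))))).smul hGcont
    have hint2 : CircleIntegrable
        (fun z : ℂ => z ^ m • (tp⁻¹ • ∑ n ∈ s, z ^ n • Q ψ n)) 0 1 := by
      apply ContinuousOn.circleIntegrable (by norm_num)
      apply ContinuousOn.smul
        ((continuousOn_id.zpow₀ m (fun z hz => Or.inl (hsphere_ne z hz))))
      apply ContinuousOn.smul continuousOn_const
      apply continuousOn_finset_sum
      intro n _
      exact ((continuousOn_id.zpow₀ n (fun z hz => Or.inl (hsphere_ne z hz)))).smul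
        continuousOn_const
    have hsplit : (∮ z in C((0:ℂ),1), z ^ m • g z)
        = (∮ z in C((0:ℂ),1), z ^ m • G z)
          - ∮ z in C((0:ℂ),1), z ^ m • (tp⁻¹ • ∑ n ∈ s, z ^ n • Q ψ n) := by
      rw [← circleIntegral.integral_sub hint1 hint2]
      apply circleIntegral.integral_congr (by norm_num)
      intro z _
      rw [hgdef]
      simp only [smul_sub]
    have hterm : (∮ z in C((0:ℂ),1), z ^ m • (tp⁻¹ • ∑ n ∈ s, z ^ n • Q ψ n))
        = tp⁻¹ • (if (-(m+1) : ℤ) ∈ s then (2*Real.pi*I : ℂ) • Q ψ (-(m+1)) else 0) := by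
      have hcongr : (∮ z in C((0:ℂ),1), z ^ m • (tp⁻¹ • ∑ n ∈ s, z ^ n • Q ψ n))
          = ∮ z in C((0:ℂ),1), tp⁻¹ • ∑ n ∈ s, z ^ (m+n) • Q ψ n := by
        apply circleIntegral.integral_congr (by norm_num)
        intro z hz
        have hz0 := hsphere_ne z hz
        dsimp only
        rw [smul_comm (z ^ m) tp⁻¹, Finset.smul_sum]
        congr 1
        apply Finset.sum_congr rfl
        intro n _
        rw [smul_smul, ← zpow_add₀ hz0]
      rw [hcongr, circleIntegral.integral_smul,
        circleIntegral_finset_sum _ _ _ _ (fun n _ => ?_)]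
      · congr 1
        have : ∀ n ∈ s, (∮ z in C((0:ℂ),1), z ^ (m+n) • Q ψ n)
            = if n = -(m+1) then (2*Real.pi*I : ℂ) • Q ψ n else 0 := by
          intro n _
          rw [moment_monomial (m+n) (Q ψ n)]
          by_cases h : n = -(m+1)
          · rw [if_pos (by omega : m+n = -1), if_pos h]
          · rw [if_neg (by omega : ¬ (m+n = -1)), if_neg h, zero_smul]
        rw [Finset.sum_congr rfl this, Finset.sum_ite_eq' s (-(m+1) : ℤ)
          (fun n => (2*Real.pi*I : ℂ) • Q ψ n)]
      · apply ContinuousOn.circleIntegrable (by norm_num)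
        exact ((continuousOn_id.zpow₀ (m+n) (fun z hz => Or.inl (hsphere_ne z hz)))).smul
          continuousOn_const
    rw [hsplit, hterm, moment_G ψ G hG hGψ m]
    by_cases hc : (-(m+1) : ℤ) ∈ s
    · rw [if_pos hc]
      rw [smul_smul]
      have : tp⁻¹ * (2*Real.pi*I : ℂ) = I := by
        have h2 : (2*Real.pi*I : ℂ) = tp * I := by rw [htpdef]; push_cast; ring
        rw [h2, ← mul_assoc, inv_mul_cancel₀ htp, one_mul]
      rw [this, sub_self]
    · rw [if_neg hc, smul_zero, sub_zero]
      have hcm : (NN ψ : ℤ) < |(-(m+1) : ℤ)| := by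
        rw [hsdef] at hc
        simp only [Finset.mem_Icc] at hc
        have hMz : (NN ψ : ℤ) ≤ (M:ℤ) := by exact_mod_cast hM
        rcases (by omega : (M:ℤ) < -(m+1) ∨ -(m+1) < -(M:ℤ)) with h | h
        · exact lt_of_le_of_lt hMz (lt_of_lt_of_le h (le_abs_self _))
        · refine lt_of_le_of_lt hMz (lt_of_lt_of_le ?_ (neg_le_abs _))
          omega
      rw [Q_vanish ψ G hG hGψ _ hcm, smul_zero]
  have hg1 := vanish_of_moments g hganal hmom 1 one_ne_zero
  rw [hgdef] at hg1
  simp only [one_zpow] at hg1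
  have hG1 : G 1 = 1 := by
    have := hGψ 1
    simpa using this
  rw [hG1, sub_eq_zero] at hg1
  have := congrArg (fun x : E => tp • x) hg1
  simpa [smul_smul, mul_inv_cancel₀ htp] using this.symm

end OneVar3

section Apply

variable {V : Type*} [NormedAddCommGroup V] [NormedSpace ℂ V] [CompleteSpace V]

lemma Q_apply_eig (ψ' : ℂˣ →* (V →L[ℂ] V)) (G' : ℂ → (V →L[ℂ] V))
    (hG : AnalyticOnNhd ℂ G' {z : ℂ | z ≠ 0}) (hGψ : ∀ u : ℂˣ, G' u = ψ' u)
    (v : V) (b : ℤ) (heig : ∀ u : ℂˣ, ψ' u v = ((u:ℂ) ^ b) • v) (n : ℤ) :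
    Q ψ' n v = (if n = b then (((2*Real.pi:ℝ)):ℂ) else 0) • v := by
  have h1 : (∫ θ in (0:ℝ)..(2*Real.pi),
        (Complex.exp (-(n:ℂ)*θ*I) • (ψ' (cu θ) : V →L[ℂ] V)) v) = Q ψ' n v := by
    rw [Q]
    exact (ContinuousLinearMap.apply ℂ V v).intervalIntegral_comp_comm
      (integrable_cexp_psi ψ' G' hG hGψ _ (by fun_prop) _ _)
  rw [← h1]
  have h2 : ∀ θ : ℝ, (Complex.exp (-(n:ℂ)*θ*I) • (ψ' (cu θ) : V →L[ℂ] V)) v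
      = Complex.exp (((b - n : ℤ):ℂ)*θ*I) • v := by
    intro θ
    rw [ContinuousLinearMap.smul_apply, heig (cu θ), cu_coe,
      ← Complex.exp_int_mul ((θ:ℝ)*I) b, smul_smul, ← Complex.exp_add]
    congr 2
    push_cast
    ring
  simp only [h2]
  rw [intervalIntegral.integral_smul_const, intExp (b - n)]
  by_cases h : n = b
  · rw [if_pos (by omega : b - n = 0), if_pos h]
  · rw [if_neg (by omega : ¬ (b - n = 0)), if_neg h]

end Apply
end S16

/-- The weight space of a representation of the complex torus `(ℂˣ)^r` for the character
`z ↦ ∏ᵢ zᵢ^{βᵢ}`, `β ∈ ℤ^r`. -/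
def torusWt {V : Type*} [NormedAddCommGroup V] [NormedSpace ℂ V] {r : ℕ}
    (π : (Fin r → ℂˣ) →* (V →L[ℂ] V)) (β : Fin r → ℤ) : Submodule ℂ V where
  carrier := {v | ∀ z : Fin r → ℂˣ, π z v = (∏ i, (z i : ℂ) ^ β i) • v}
  add_mem' := by
    intro a b ha hb z
    rw [map_add, ha z, hb z, smul_add]
  zero_mem' := by intro z; simp
  smul_mem' := by
    intro c a ha z
    rw [map_smul, ha z]
    exact smul_comm c _ a

open S16 in
lemma mem_torusWt {V : Type*} [NormedAddCommGroup V] [NormedSpace ℂ V] {r : ℕ}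
    (π : (Fin r → ℂˣ) →* (V →L[ℂ] V)) (β : Fin r → ℤ) (v : V) :
    v ∈ torusWt π β ↔ ∀ z : Fin r → ℂˣ, π z v = (∏ i, (z i : ℂ) ^ β i) • v := Iff.rfl

open S16 in
/-- Every holomorphic Banach representation `π` of the complex torus
`H = (ℂˣ)^r` has only finitely many weights, and `V` is the direct sum of the
corresponding weight spaces. -/
theorem stmt16 {V : Type*} [NormedAddCommGroup V] [NormedSpace ℂ V] [CompleteSpace V]
    {r : ℕ} (π : (Fin r → ℂˣ) →* (V →L[ℂ] V))
    (hhol : ∃ F : (Fin r → ℂ) → (V →L[ℂ] V),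
      AnalyticOnNhd ℂ F {z | ∀ i, z i ≠ 0} ∧
      ∀ z : Fin r → ℂˣ, F (fun i => (z i : ℂ)) = π z) :
    ∃ S : Finset (Fin r → ℤ),
      (∀ β : Fin r → ℤ, torusWt π β ≠ ⊥ → β ∈ S) ∧
      (⨆ β ∈ S, torusWt π β) = ⊤ := by
  classical
  obtain ⟨F, hF, hFπ⟩ := hhol
  set ψ : Fin r → (ℂˣ →* (V →L[ℂ] V)) :=
    fun i => π.comp (MonoidHom.mulSingle (fun _ => ℂˣ) i) with hψdef
  set Gm : Fin r → ℂ → (V →L[ℂ] V) :=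
    fun i t => F (fun j => if j = i then t else 1) with hGmdef
  have hGm : ∀ i, AnalyticOnNhd ℂ (Gm i) {z : ℂ | z ≠ 0} := by
    intro i
    have hins : AnalyticOnNhd ℂ
        (fun t : ℂ => (fun j : Fin r => if j = i then t else (1:ℂ))) {z : ℂ | z ≠ 0} := by
      have heq : (fun t : ℂ => (fun j : Fin r => if j = i then t else (1:ℂ)))
          = fun t : ℂ => ((fun j : Fin r => if j = i then (0:ℂ) else 1)
            + t • (fun j : Fin r => if j = i then (1:ℂ) else 0)) := by
        funext t j
        by_cases h : j = i <;> simp [h]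
      rw [heq]
      exact analyticOnNhd_const.add (analyticOnNhd_id.smul analyticOnNhd_const)
    apply hF.comp hins
    intro t ht j
    dsimp only
    split
    · exact ht
    · exact one_ne_zero
  have hGψ : ∀ i (u : ℂˣ), Gm i (u:ℂ) = ψ i u := by
    intro i u
    have h := hFπ (Pi.mulSingle i u)
    have harg : (fun j => ((Pi.mulSingle i u : Fin r → ℂˣ) j : ℂ))
        = (fun j => if j = i then (u:ℂ) else 1) := by
      funext j
      rw [Pi.mulSingle_apply]
      by_cases hj : j = i <;> simp [hj]
    rw [harg] at h
    exact h
  set tp : ℂ := ((2*Real.pi:ℝ):ℂ) with htpdef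
  have htp : tp ≠ 0 := by simp [htpdef, Real.pi_ne_zero]
  set N : ℕ := Finset.univ.sup (fun i => NN (ψ i)) with hNdef
  have hNi : ∀ i, NN (ψ i) ≤ N := fun i => Finset.le_sup (f := fun i => NN (ψ i)) (Finset.mem_univ i)
  set S : Finset (Fin r → ℤ) := Finset.Icc (fun _ => -(N:ℤ)) (fun _ => (N:ℤ)) with hSdef
  refine ⟨S, ?_, ?_⟩
  · -- every occurring weight is in S
    intro β hβ
    obtain ⟨v, hv, hv0⟩ := (Submodule.ne_bot_iff _).mp hβ
    rw [mem_torusWt] at hv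
    have heig : ∀ i (u : ℂˣ), ψ i u v = ((u:ℂ) ^ (β i)) • v := by
      intro i u
      set μ : Fin r → ℂˣ := Pi.mulSingle i u with hμdef
      have h := hv μ
      have hprod : (∏ j, ((μ j : ℂˣ) : ℂ) ^ β j) = (u:ℂ) ^ (β i) := by
        rw [Finset.prod_eq_single i]
        · rw [show μ i = u from by rw [hμdef, Pi.mulSingle_apply, if_pos rfl]]
        · intro j _ hj
          rw [show μ j = 1 from by rw [hμdef, Pi.mulSingle_apply, if_neg hj]]
          simp
        · intro h'; exact absurd (Finset.mem_univ i) h'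
      rw [hprod] at h
      exact h
    have hmem : ∀ i, -(N:ℤ) ≤ β i ∧ β i ≤ (N:ℤ) := by
      intro i
      by_contra hcon
      have habs : (N:ℤ) < |β i| := by
        rcases abs_cases (β i) with ⟨h1, h2⟩ | ⟨h1, h2⟩ <;> omega
      have hNlt : ((NN (ψ i) : ℤ)) < |β i| :=
        lt_of_le_of_lt (by exact_mod_cast hNi i) habs
      have h0 := Q_vanish (ψ i) (Gm i) (hGm i) (hGψ i) (β i) hNlt
      have h1 := Q_apply_eig (ψ i) (Gm i) (hGm i) (hGψ i) v (β i) (heig i) (β i)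
      rw [h0, if_pos rfl] at h1
      have : tp • v = 0 := by
        rw [htpdef, ← h1]
        simp
      exact hv0 ((smul_eq_zero.mp this).resolve_left htp)
    rw [hSdef, Finset.mem_Icc]
    exact ⟨fun i => (hmem i).1, fun i => (hmem i).2⟩
  · -- the weight spaces span
    rw [eq_top_iff]
    intro v _
    set T := ⨆ β ∈ S, torusWt π β with hTdef
    show v ∈ T
    have hcomm : ∀ (i : Fin r) (a : Fin r → ℂˣ) (n : ℤ),
        π a * Q (ψ i) n = Q (ψ i) n * π a := by
      intro i a n
      apply commute_Q (ψ i) (Gm i) (hGm i) (hGψ i)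
      intro θ
      show π a * π (Pi.mulSingle i (cu θ)) = π (Pi.mulSingle i (cu θ)) * π a
      rw [← map_mul, ← map_mul, mul_comm]
    have main : ∀ (m k : ℕ), r ≤ k + m → ∀ β ∈ S, ∀ w : V,
        (∀ z : Fin r → ℂˣ, (∀ i : Fin r, k ≤ (i:ℕ) → z i = 1) →
          π z w = (∏ i, (z i : ℂ) ^ β i) • w) → w ∈ T := by
      intro m
      induction m with
      | zero =>
          intro k hk β hβ w hw
          have hle : torusWt π β ≤ T := by
            rw [hTdef]
            exact le_iSup₂ (f := fun β _ => torusWt π β) β hβ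
          apply hle
          rw [mem_torusWt]
          intro z
          apply hw z
          intro i hi
          have := i.isLt
          omega
      | succ m ih =>
          intro k hk β hβ w hw
          by_cases hkr : r ≤ k
          · exact ih k (by omega) β hβ w hw
          push_neg at hkr
          set i0 : Fin r := ⟨k, hkr⟩ with hi0def
          have hsum := sum_Q (ψ i0) (Gm i0) (hGm i0) (hGψ i0) N (hNi i0)
          have hsumv : ∑ n ∈ Finset.Icc (-(N:ℤ)) (N:ℤ), Q (ψ i0) n w = tp • w := by
            have h := congrArg (fun A : V →L[ℂ] V => A w) hsum
            simp only [ContinuousLinearMap.sum_apply, ContinuousLinearMap.smul_apply,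
              ContinuousLinearMap.one_apply] at h
            exact h
          have hpiece : ∀ n ∈ Finset.Icc (-(N:ℤ)) (N:ℤ), Q (ψ i0) n w ∈ T := by
            intro n hn
            rw [Finset.mem_Icc] at hn
            refine ih (k+1) (by omega) (Function.update β i0 n) ?_ _ ?_
            · rw [hSdef, Finset.mem_Icc] at hβ ⊢
              constructor <;> intro j
              · by_cases hj : j = i0
                · subst hj; rw [Function.update_self]; exact hn.1
                · rw [Function.update_of_ne hj]; exact hβ.1 j
              · by_cases hj : j = i0
                · subst hj; rw [Function.update_self]; exact hn.2
                · rw [Function.update_of_ne hj]; exact hβ.2 j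
            · intro z hz
              set z' : Fin r → ℂˣ := Function.update z i0 1 with hz'def
              have hz'mask : ∀ i : Fin r, k ≤ (i:ℕ) → z' i = 1 := by
                intro i hi
                by_cases h : i = i0
                · subst h; rw [hz'def, Function.update_self]
                · rw [hz'def, Function.update_of_ne h]
                  apply hz
                  have hne : (i:ℕ) ≠ k := by
                    intro hval
                    exact h (Fin.ext hval)
                  omega
              have hzdecomp : z = Pi.mulSingle i0 (z i0) * z' := by
                funext j
                rw [Pi.mul_apply, Pi.mulSingle_apply]
                by_cases h : j = i0
                · subst h; rw [if_pos rfl, hz'def, Function.update_self, mul_one]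
                · rw [if_neg h, hz'def, Function.update_of_ne h, one_mul]
              have hπz' : π z' (Q (ψ i0) n w)
                  = (∏ i, (z' i : ℂ) ^ β i) • Q (ψ i0) n w := by
                calc π z' (Q (ψ i0) n w) = (π z' * Q (ψ i0) n) w :=
                      (ContinuousLinearMap.mul_apply _ _ _).symm
                  _ = (Q (ψ i0) n * π z') w := by rw [hcomm i0 z' n]
                  _ = Q (ψ i0) n (π z' w) := ContinuousLinearMap.mul_apply _ _ _
                  _ = Q (ψ i0) n ((∏ i, (z' i : ℂ) ^ β i) • w) := by rw [hw z' hz'mask]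
                  _ = (∏ i, (z' i : ℂ) ^ β i) • Q (ψ i0) n w := map_smul _ _ _
              have hψz : (ψ i0) (z i0) * Q (ψ i0) n = ((z i0 : ℂ))^n • Q (ψ i0) n := by
                have h := G_mul_Q (ψ i0) (Gm i0) (hGm i0) (hGψ i0) n (z i0 : ℂ)
                  (Units.ne_zero _)
                rwa [hGψ i0 (z i0)] at h
              have hscal : (∏ i, (z' i : ℂ) ^ β i) * ((z i0 : ℂ))^n
                  = ∏ i, (z i : ℂ) ^ (Function.update β i0 n i) := by
                have hterm : ∀ j : Fin r, (z j : ℂ) ^ (Function.update β i0 n j)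
                    = Function.update (fun j => (z' j : ℂ) ^ (β j)) i0 ((z i0 : ℂ) ^ n) j := by
                  intro j
                  by_cases h : j = i0
                  · subst h
                    rw [Function.update_self, Function.update_self]
                  · rw [Function.update_of_ne h, Function.update_of_ne h, hz'def,
                      Function.update_of_ne h]
                rw [Finset.prod_congr rfl (fun j _ => hterm j),
                  Finset.prod_update_of_mem (Finset.mem_univ i0)]
                have hz'one : ((z' i0 : ℂ)) ^ (β i0) = 1 := by
                  rw [hz'def, Function.update_self]
                  simp
                have hsplit2 : (∏ i, (z' i : ℂ) ^ β i)
                    = ∏ i ∈ Finset.univ \ {i0}, (z' i : ℂ) ^ β i := by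
                  rw [← Finset.erase_eq]
                  exact (Finset.prod_erase (f := fun i => ((z' i : ℂ)) ^ β i) _ hz'one).symm
                rw [hsplit2]
                ring
              calc π z (Q (ψ i0) n w)
                  = π (Pi.mulSingle i0 (z i0) * z') (Q (ψ i0) n w) := by rw [← hzdecomp]
                _ = (ψ i0 (z i0)) (π z' (Q (ψ i0) n w)) := by
                    rw [map_mul]
                    exact ContinuousLinearMap.mul_apply _ _ _
                _ = (ψ i0 (z i0)) ((∏ i, (z' i : ℂ) ^ β i) • Q (ψ i0) n w) := by rw [hπz']
                _ = (∏ i, (z' i : ℂ) ^ β i) • ((ψ i0 (z i0) * Q (ψ i0) n) w) := by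
                    rw [map_smul, ContinuousLinearMap.mul_apply]
                _ = (∏ i, (z' i : ℂ) ^ β i) • (((z i0 : ℂ))^n • Q (ψ i0) n w) := by
                    rw [hψz, ContinuousLinearMap.smul_apply]
                _ = (∏ i, (z i : ℂ) ^ (Function.update β i0 n i)) • Q (ψ i0) n w := by
                    rw [smul_smul, hscal]
          have hveq : w = tp⁻¹ • ∑ n ∈ Finset.Icc (-(N:ℤ)) (N:ℤ), Q (ψ i0) n w := by
            rw [hsumv, smul_smul, inv_mul_cancel₀ htp, one_smul]
          rw [hveq]
          exact Submodule.smul_mem _ _ (Submodule.sum_mem _ (fun n hn => hpiece n hn))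
    have h0S : (0 : Fin r → ℤ) ∈ S := by
      rw [hSdef, Finset.mem_Icc]
      constructor <;> intro i <;> simp
    apply main r 0 (by omega) 0 h0S v
    intro z hz
    have hz1 : z = 1 := funext fun i => hz i (Nat.zero_le _)
    rw [hz1, map_one]
    simp


end
end

section
/- Let (ρ_E,E) be an irreducible continuous Banach representation of the parabolic subalgebra 𝔭 = 𝔲 ⋊ 𝔩 of a weakly root graded Banach–Lie algebra, decomposing into finitely many 𝔥-weight spaces. Then 𝔲 acts trivially on E. -/
attribute [local instance 100] LieRing.ofAssociativeRing

/-- Let `(ρ, E)` be an irreducible continuous Banach representation of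
the parabolic subalgebra `P = 𝔲 ⋊ 𝔩` of a weakly root graded Banach–Lie algebra,
decomposing into finitely many `H`-weight spaces.  Then the nilpotent ideal
`𝔲 = ⊕_{α ∈ Σ⁺} L_α` acts trivially on `E`. -/
theorem stmt17 {L : Type*} [LieRing L] [LieAlgebra ℂ L]
    [NormedAddCommGroup L] [NormedSpace ℂ L] [CompleteSpace L]
    (H : LieSubalgebra ℂ L)
    (R Ss Sp : Finset (Module.Dual ℂ H)) (hSR : Ss ⊆ R)
    (hSp : ∀ α, α ∈ Sp ↔ α ∈ Ss ∧ -α ∉ Ss)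
    (x : H) (hx : ∀ α ∈ Sp, 1 ≤ (α x).re)
    (P : LieSubalgebra ℂ L)
    (hP : P.toSubmodule = wtSpace H 0 ⊔ ⨆ α ∈ Ss, wtSpace H α)
    (hHP : ∀ h : H, (h : L) ∈ P)
    (hUP : (⨆ α ∈ Sp, wtSpace (L := L) H α) ≤ P.toSubmodule)
    -- 𝔲 is an ideal of 𝔭
    (hideal : ∀ y u : L, y ∈ P → u ∈ (⨆ α ∈ Sp, wtSpace (L := L) H α) →
      ⁅y, u⁆ ∈ (⨆ α ∈ Sp, wtSpace (L := L) H α))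
    {E : Type*} [NormedAddCommGroup E] [NormedSpace ℂ E] [CompleteSpace E] [Nontrivial E]
    (ρ : P →ₗ⁅ℂ⁆ Module.End ℂ E)
    (hcont : ∀ y : P, Continuous (ρ y))
    -- irreducibility: no proper nonzero closed invariant subspace
    (hirr : ∀ W : Submodule ℂ E, IsClosed (W : Set E) →
      (∀ y : P, ∀ v ∈ W, ρ y v ∈ W) → W = ⊥ ∨ W = ⊤)
    -- E decomposes into finitely many H-weight spaces
    (Ewt : Module.Dual ℂ H → Submodule ℂ E)
    (hEwt : ∀ μ v, v ∈ Ewt μ ↔ ∀ h : H, ρ ⟨(h : L), hHP h⟩ v = μ h • v)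
    (hEfin : {μ | Ewt μ ≠ ⊥}.Finite)
    (hEsup : (⨆ μ, Ewt μ) = ⊤) :
    ∀ y : P, (y : L) ∈ (⨆ α ∈ Sp, wtSpace (L := L) H α) → ρ y = 0 := by
  classical
  set U := ⨆ α ∈ Sp, wtSpace (L := L) H α with hUdef
  -- bracket formula for the representation
  have hbr : ∀ a b : P, ∀ w : E, ρ ⁅a, b⁆ w = ρ a (ρ b w) - ρ b (ρ a w) := by
    intro a b w
    rw [ρ.map_lie]
    simp [Ring.lie_def, LinearMap.sub_apply, Module.End.mul_apply]
  -- there is a nonzero weight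
  have hne : ∃ μ, Ewt μ ≠ ⊥ := by
    by_contra h
    push_neg at h
    have htop : (⊤ : Submodule ℂ E) = ⊥ := by
      rw [← hEsup]; simp [h]
    obtain ⟨v, hv⟩ := exists_ne (0 : E)
    have hvtop : v ∈ (⊤ : Submodule ℂ E) := Submodule.mem_top
    rw [htop] at hvtop
    exact hv (by simpa using hvtop)
  -- maximal weight w.r.t. Re ∘ evaluation at x
  set T := hEfin.toFinset with hTdef
  have hTne : T.Nonempty := by
    obtain ⟨μ, hμ⟩ := hne
    exact ⟨μ, hEfin.mem_toFinset.mpr hμ⟩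
  obtain ⟨μ₀, hμ₀T, hmax⟩ := T.exists_max_image (fun μ => (μ x).re) hTne
  have hμ₀ : Ewt μ₀ ≠ ⊥ := hEfin.mem_toFinset.mp hμ₀T
  obtain ⟨v, hv, hv0⟩ := Submodule.exists_mem_ne_zero_of_ne_bot hμ₀
  -- weights above the maximum vanish
  have hvanish : ∀ α ∈ Sp, Ewt (μ₀ + α) = ⊥ := by
    intro α hα
    by_contra hne'
    have hmem : (μ₀ + α) ∈ T := hEfin.mem_toFinset.mpr hne'
    have h2 := hmax _ hmem
    have h1 := hx α hα
    have : ((μ₀ + α) x).re = (μ₀ x).re + (α x).re := by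
      simp [Complex.add_re]
    simp only [this] at h2
    linarith
  -- key: every element of U kills v
  have key : ∀ u, u ∈ U → ∀ hu : u ∈ P, ρ ⟨u, hu⟩ v = 0 := by
    have hU' : U = ⨆ α : {α // α ∈ Sp}, wtSpace (L := L) H (α : Module.Dual ℂ H) := by
      rw [hUdef, iSup_subtype]
    intro u hu
    rw [hU'] at hu
    induction hu using Submodule.iSup_induction' with
    | mem i u hu =>
      intro huP
      have hα : (i : Module.Dual ℂ H) ∈ Sp := i.2
      have hw : ρ ⟨u, huP⟩ v ∈ Ewt (μ₀ + (i : Module.Dual ℂ H)) := by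
        rw [hEwt]
        intro h
        have hbrHU : (⁅(⟨(h : L), hHP h⟩ : P), (⟨u, huP⟩ : P)⁆ : P)
            = ((i : Module.Dual ℂ H) h) • (⟨u, huP⟩ : P) := by
          apply Subtype.ext
          exact hu h
        have hc := hbr ⟨(h : L), hHP h⟩ ⟨u, huP⟩ v
        rw [hbrHU, map_smul] at hc
        have hρh : ρ ⟨(h : L), hHP h⟩ v = μ₀ h • v := (hEwt μ₀ v).mp hv h
        rw [hρh, LinearMap.map_smul, LinearMap.smul_apply] at hc
        rw [eq_sub_iff_add_eq] at hc
        rw [← hc, LinearMap.add_apply, add_smul]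
        exact add_comm _ _
      rw [hvanish _ hα] at hw
      simpa using hw
    | zero =>
      intro huP
      have h0 : (⟨_, huP⟩ : P) = 0 := Subtype.ext rfl
      rw [h0, map_zero]
      rfl
    | add a b ha hb iha ihb =>
      intro huP
      have haU : a ∈ U := by rw [hU']; exact ha
      have hbU : b ∈ U := by rw [hU']; exact hb
      have haP : a ∈ P := hUP haU
      have hbP : b ∈ P := hUP hbU
      have hsum : (⟨_, huP⟩ : P) = ⟨a, haP⟩ + ⟨b, hbP⟩ := Subtype.ext rfl
      rw [hsum, map_add, LinearMap.add_apply, iha haP, ihb hbP, add_zero]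
  -- the invariant subspace of vectors killed by U
  let W : Submodule ℂ E :=
    { carrier := {w | ∀ y : P, (y : L) ∈ U → ρ y w = 0}
      add_mem' := by
        intro a b ha hb y hy
        rw [map_add, ha y hy, hb y hy, add_zero]
      zero_mem' := by intro y hy; simp
      smul_mem' := by
        intro c a ha y hy
        rw [map_smul, ha y hy, smul_zero] }
  have hWclosed : IsClosed (W : Set E) := by
    have : (W : Set E) = ⋂ (y : P), ⋂ (_ : (y : L) ∈ U), (ρ y) ⁻¹' {0} := by
      ext w
      simp [W, Set.mem_iInter]
    rw [this]
    exact isClosed_iInter fun y => isClosed_iInter fun _ =>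
      (isClosed_singleton).preimage (hcont y)
  have hWinv : ∀ y : P, ∀ w ∈ W, ρ y w ∈ W := by
    intro y w hw z hz
    have h1 : ⁅(y : L), (z : L)⁆ ∈ U := hideal (y : L) (z : L) y.2 hz
    have hbU : ((⁅y, z⁆ : P) : L) ∈ U := by
      rw [LieSubalgebra.coe_bracket]
      exact h1
    have hc := hbr y z w
    have hz0 : ρ z w = 0 := hw z hz
    have hb0 : ρ ⁅y, z⁆ w = 0 := hw ⁅y, z⁆ hbU
    rw [hb0, hz0, map_zero] at hc
    have := sub_eq_zero.mp hc.symm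
    simpa using this.symm
  have hvW : v ∈ W := by
    intro y hy
    have := key (y : L) hy y.2
    simpa using this
  rcases hirr W hWclosed hWinv with hbot | htop
  · exact absurd (hbot ▸ hvW) (by simpa using hv0)
  · intro y hy
    apply LinearMap.ext
    intro w
    have hwW : w ∈ W := htop ▸ (Submodule.mem_top : w ∈ (⊤ : Submodule ℂ E))
    simpa using hwW y hy
end
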